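/- arXiv:1707.09200 — 8 statements merged into one kernel-verified Lean document; each statement's English description precedes it below -/
import Mathlib

section
/- Let X be a quasi-Banach space, Y a γ-Banach space (0 < γ ≤ 1), and T : X → Y a bounded linear operator. Then 2^{1-1/γ}‖T‖ ≤ e₁(T) ≤ ‖T‖, where e₁(T) is the first outer entropy number of T, i.e., the infimum of all ε > 0 such that T(B_X) is contained in a single ball of radius ε in Y. -/
open scoped BigOperators ENNReal

noncomputable section

/-- A γ-norm on a real vector space. -/
def IsGammaNorm {Y : Type*} [AddCommGroup Y] [Module ℝ Y] (γ : ℝ) (N : Y → ℝ) : Prop :=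
  (∀ y, 0 ≤ N y) ∧ (∀ y, N y = 0 ↔ y = 0) ∧
    (∀ (a : ℝ) (y : Y), N (a • y) = |a| * N y) ∧
    (∀ y z, N (y + z) ^ γ ≤ N y ^ γ + N z ^ γ)

/-- A quasi-norm with constant `C` on a real vector space. -/
def IsQuasiNorm {X : Type*} [AddCommGroup X] [Module ℝ X] (C : ℝ) (N : X → ℝ) : Prop :=
  1 ≤ C ∧ (∀ x, 0 ≤ N x) ∧ (∀ x, N x = 0 ↔ x = 0) ∧
    (∀ (a : ℝ) (x : X), N (a • x) = |a| * N x) ∧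
    (∀ x y, N (x + y) ≤ C * (N x + N y))

/-- Completeness with respect to a (quasi/γ-)norm `N`. -/
def NormComplete {Y : Type*} [AddCommGroup Y] (N : Y → ℝ) : Prop :=
  ∀ f : ℕ → Y,
    (∀ ε : ℝ, 0 < ε → ∃ n₀ : ℕ, ∀ m n, n₀ ≤ m → n₀ ≤ n → N (f m - f n) < ε) →
    ∃ y : Y, ∀ ε : ℝ, 0 < ε → ∃ n₀ : ℕ, ∀ n, n₀ ≤ n → N (f n - y) < ε

/-- Operator norm of a linear map w.r.t. norms `NX`, `NY`. -/
def opNorm {X Y : Type*} [AddCommGroup X] [Module ℝ X] [AddCommGroup Y] [Module ℝ Y]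
    (NX : X → ℝ) (NY : Y → ℝ) (T : X →ₗ[ℝ] Y) : ℝ :=
  sSup {r : ℝ | ∃ x : X, NX x ≤ 1 ∧ r = NY (T x)}

/-- The `k`-th (dyadic) outer entropy number of `T`. -/
def entropy {X Y : Type*} [AddCommGroup X] [Module ℝ X] [AddCommGroup Y] [Module ℝ Y]
    (NX : X → ℝ) (NY : Y → ℝ) (T : X →ₗ[ℝ] Y) (k : ℕ) : ℝ :=
  sInf {ε : ℝ | 0 < ε ∧ ∃ c : Fin (2 ^ (k - 1)) → Y,
    ∀ x : X, NX x ≤ 1 → ∃ i, NY (T x - c i) ≤ ε}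

/-- The `k`-th (dyadic) inner entropy number of `T`. -/
def innerEntropy {X Y : Type*} [AddCommGroup X] [Module ℝ X] [AddCommGroup Y] [Module ℝ Y]
    (NX : X → ℝ) (NY : Y → ℝ) (T : X →ₗ[ℝ] Y) (k : ℕ) : ℝ :=
  sSup {ε : ℝ | 0 < ε ∧ ∃ p : Fin (2 ^ (k - 1) + 1) → X,
    (∀ i, NX (p i) ≤ 1) ∧ ∀ i j, i ≠ j → 2 * ε ≤ NY (T (p i) - T (p j))}

theorem first_entropy_bounds {X Y : Type*} [AddCommGroup X] [Module ℝ X]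
    [AddCommGroup Y] [Module ℝ Y] (γ C : ℝ) (hγ : 0 < γ) (hγ1 : γ ≤ 1)
    (NX : X → ℝ) (NY : Y → ℝ)
    (hNX : IsQuasiNorm C NX) (hXc : NormComplete NX)
    (hNY : IsGammaNorm γ NY) (hYc : NormComplete NY)
    (T : X →ₗ[ℝ] Y) (hT : ∃ M : ℝ, ∀ x, NY (T x) ≤ M * NX x) :
    (2 : ℝ) ^ (1 - 1/γ) * opNorm NX NY T ≤ entropy NX NY T 1 ∧
      entropy NX NY T 1 ≤ opNorm NX NY T := by
  obtain ⟨M, hM⟩ := hT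
  obtain ⟨Ynn, Yzero, Yhom, Ytri⟩ := hNY
  obtain ⟨hC1, Xnn, Xzero, Xhom, Xtri⟩ := hNX
  set A : Set ℝ := {r : ℝ | ∃ x : X, NX x ≤ 1 ∧ r = NY (T x)} with hA
  set S : Set ℝ := {ε : ℝ | 0 < ε ∧ ∃ c : Fin (2 ^ (1 - 1)) → Y,
    ∀ x : X, NX x ≤ 1 → ∃ i, NY (T x - c i) ≤ ε} with hS
  have hAne : A.Nonempty := by
    refine ⟨NY (T 0), 0, ?_, rfl⟩
    rw [(Xzero 0).mpr rfl]; norm_num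
  have hAbd : BddAbove A := by
    refine ⟨max M 0, ?_⟩
    rintro r ⟨x, hx, rfl⟩
    calc NY (T x) ≤ M * NX x := hM x
      _ ≤ max M 0 * NX x := mul_le_mul_of_nonneg_right (le_max_left _ _) (Xnn x)
      _ ≤ max M 0 * 1 := mul_le_mul_of_nonneg_left hx (le_max_right _ _)
      _ = max M 0 := mul_one _
  have hop0 : 0 ≤ opNorm NX NY T := by
    have h0A : (0 : ℝ) ∈ A := by
      refine ⟨0, ?_, ?_⟩
      · rw [(Xzero 0).mpr rfl]; norm_num
      · rw [map_zero, (Yzero 0).mpr rfl]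
    exact le_csSup hAbd h0A
  have hopub : ∀ x : X, NX x ≤ 1 → NY (T x) ≤ opNorm NX NY T := by
    intro x hx
    exact le_csSup hAbd ⟨x, hx, rfl⟩
  have hSbd : BddBelow S := ⟨0, fun ε hε => le_of_lt hε.1⟩
  have hSmem : ∀ δ : ℝ, 0 < δ → opNorm NX NY T + δ ∈ S := by
    intro δ hδ
    refine ⟨by linarith, fun _ => 0, fun x hx => ⟨0, ?_⟩⟩
    rw [sub_zero]
    linarith [hopub x hx]
  have hSne : S.Nonempty := ⟨_, hSmem 1 one_pos⟩
  have hγ' : γ ≠ 0 := ne_of_gt hγ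
  constructor
  · -- lower bound
    apply le_csInf hSne
    rintro ε ⟨hε, c, hc⟩
    -- show opNorm ≤ 2^(1/γ-1) * ε
    set K : ℝ := (2 : ℝ) ^ (1/γ - 1) * ε with hK
    have hKnn : 0 ≤ K := mul_nonneg (Real.rpow_nonneg (by norm_num) _) hε.le
    have hopK : opNorm NX NY T ≤ K := by
      apply csSup_le hAne
      rintro r ⟨x, hx, rfl⟩
      obtain ⟨i, hi⟩ := hc x hx
      have hxneg : NX (-x) ≤ 1 := by
        have := Xhom (-1) x
        rw [neg_one_smul] at this
        rw [this]; simpa using hx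
      obtain ⟨j, hj⟩ := hc (-x) hxneg
      have hij : j = i := by
        have h1 : (j : ℕ) < 1 := by simpa using j.isLt
        have h2 : (i : ℕ) < 1 := by simpa using i.isLt
        exact Fin.ext (by omega)
      rw [hij] at hj
      -- combine
      have hkey : (T x - c i) + -(T (-x) - c i) = (2 : ℝ) • T x := by
        rw [map_neg, two_smul]; abel
      have hneg : NY (-(T (-x) - c i)) = NY (T (-x) - c i) := by
        have := Yhom (-1) (T (-x) - c i)
        rw [neg_one_smul] at this
        rw [this]; simp
      have h2 : NY ((2 : ℝ) • T x) = 2 * NY (T x) := by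
        rw [Yhom]; norm_num
      have hsum : (2 * NY (T x)) ^ γ ≤ 2 * ε ^ γ := by
        have htri := Ytri (T x - c i) (-(T (-x) - c i))
        rw [hkey, h2, hneg] at htri
        have h1 : NY (T x - c i) ^ γ ≤ ε ^ γ :=
          Real.rpow_le_rpow (Ynn _) hi hγ.le
        have h2' : NY (T (-x) - c i) ^ γ ≤ ε ^ γ :=
          Real.rpow_le_rpow (Ynn _) hj hγ.le
        linarith
      have h2K : (2 * K) ^ γ = 2 * ε ^ γ := by
        have h2pow : (2:ℝ) ^ (1/γ) = 2 * (2:ℝ) ^ (1/γ - 1) := by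
          rw [Real.rpow_sub (by norm_num : (0:ℝ) < 2), Real.rpow_one]
          ring
        have : 2 * K = (2 : ℝ) ^ (1/γ) * ε := by
          rw [hK, ← mul_assoc, h2pow]
        rw [this, Real.mul_rpow (Real.rpow_nonneg (by norm_num) _) hε.le,
          ← Real.rpow_mul (by norm_num : (0:ℝ) ≤ 2), one_div,
          inv_mul_cancel₀ hγ', Real.rpow_one]
      have hle : 2 * NY (T x) ≤ 2 * K := by
        rw [← Real.rpow_le_rpow_iff (mul_nonneg (by norm_num) (Ynn _))
          (mul_nonneg (by norm_num) hKnn) hγ, h2K]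
        exact hsum
      linarith
    calc (2 : ℝ) ^ (1 - 1/γ) * opNorm NX NY T
        ≤ (2 : ℝ) ^ (1 - 1/γ) * K :=
          mul_le_mul_of_nonneg_left hopK (Real.rpow_nonneg (by norm_num) _)
      _ = ε := by
          rw [hK, ← mul_assoc, ← Real.rpow_add (by norm_num : (0:ℝ) < 2)]
          norm_num
  · -- upper bound
    apply le_of_forall_pos_le_add
    intro δ hδ
    exact csInf_le hSbd (hSmem δ hδ)
end
end

section
/- Let I : ℓ_γ → ℓ_γ be the identity map on the sequence space ℓ_γ for 0 < γ ≤ 1. Then for every k ∈ ℕ, the k-th inner entropy number satisfies f_k(I) ≥ 2^{1/γ - 1} = 2^{1/γ - 1}‖I‖. -/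
noncomputable section

/-- Membership in the sequence space `ℓ_γ`. -/
def Memlg (γ : ℝ) (x : ℕ → ℝ) : Prop := Summable fun i => |x i| ^ γ

/-- The `ℓ_γ` γ-norm. -/
def lgNorm (γ : ℝ) (x : ℕ → ℝ) : ℝ := (∑' i, |x i| ^ γ) ^ (1/γ)

lemma rpow_add_le (γ : ℝ) (hγ : 0 < γ) (hγ1 : γ ≤ 1) {a b : ℝ}
    (ha : 0 ≤ a) (hb : 0 ≤ b) : (a + b) ^ γ ≤ a ^ γ + b ^ γ := by
  lift a to NNReal using ha
  lift b to NNReal using hb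
  rw [← NNReal.coe_add, ← NNReal.coe_rpow, ← NNReal.coe_rpow, ← NNReal.coe_rpow,
    ← NNReal.coe_add, NNReal.coe_le_coe]
  exact NNReal.rpow_add_le_add_rpow a b hγ.le hγ1

theorem inner_entropy_lg_identity (γ : ℝ) (hγ : 0 < γ) (hγ1 : γ ≤ 1)
    (k : ℕ) (hk : 1 ≤ k) :
    (2 : ℝ) ^ (1/γ - 1) ≤
      sSup {ε : ℝ | 0 < ε ∧ ∃ p : Fin (2 ^ (k - 1) + 1) → (ℕ → ℝ),
        (∀ i, Memlg γ (p i) ∧ lgNorm γ (p i) ≤ 1) ∧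
        ∀ i j, i ≠ j → 2 * ε ≤ lgNorm γ (p i - p j)} := by
  have hγne : γ ≠ 0 := hγ.ne'
  have h1γ : (0:ℝ) < 1/γ := by positivity
  have key2 : (2:ℝ) * 2 ^ (1/γ - 1) = 2 ^ (1/γ) := by
    nth_rewrite 1 [show (2:ℝ) = (2:ℝ) ^ (1:ℝ) from (Real.rpow_one 2).symm]
    rw [← Real.rpow_add (by norm_num)]
    ring_nf
  -- the candidate points
  set N := 2 ^ (k - 1) + 1 with hN
  have hN2 : 1 < N := by
    have : 0 < 2 ^ (k-1) := by positivity
    omega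
  set p : Fin N → ℕ → ℝ := fun i n => if n = i.val then 1 else 0 with hp
  have habs : ∀ (i : Fin N) (n : ℕ), |p i n| ^ γ = if n = i.val then 1 else 0 := by
    intro i n
    by_cases h : n = i.val <;> simp [hp, h, Real.zero_rpow hγne]
  have hsum : ∀ i : Fin N, Summable fun n => |p i n| ^ γ := by
    intro i
    apply summable_of_ne_finset_zero (s := {i.val})
    intro n hn
    simp only [Finset.mem_singleton] at hn
    rw [habs]
    simp [hn]
  have htsum : ∀ i : Fin N, (∑' n, |p i n| ^ γ) = 1 := by
    intro i
    rw [tsum_eq_single i.val]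
    · rw [habs]; simp
    · intro n hn; rw [habs]; simp [hn]
  -- pairwise distances
  have habsd : ∀ (i j : Fin N), i ≠ j → ∀ n,
      |(p i - p j) n| ^ γ = if n = i.val then 1 else if n = j.val then 1 else 0 := by
    intro i j hij n
    have hij' : i.val ≠ j.val := fun h => hij (Fin.val_injective h)
    by_cases h1 : n = i.val
    · simp [hp, h1, hij', Real.one_rpow]
    · by_cases h2 : n = j.val
      · simp [hp, h1, h2, hij'.symm, Real.one_rpow]
      · simp [hp, h1, h2, Pi.sub_apply, Real.zero_rpow hγne]
  have htsumd : ∀ (i j : Fin N), i ≠ j → (∑' n, |(p i - p j) n| ^ γ) = 2 := by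
    intro i j hij
    have hij' : i.val ≠ j.val := fun h => hij (Fin.val_injective h)
    rw [tsum_eq_sum (s := {i.val, j.val})]
    · rw [Finset.sum_pair hij']
      rw [habsd i j hij, habsd i j hij]
      simp [hij'.symm]
      norm_num
    · intro n hn
      simp only [Finset.mem_insert, Finset.mem_singleton, not_or] at hn
      rw [habsd i j hij]
      simp [hn.1, hn.2]
  -- the chosen ε is in the set
  have hmem : (2:ℝ) ^ (1/γ - 1) ∈ {ε : ℝ | 0 < ε ∧ ∃ p : Fin N → (ℕ → ℝ),
      (∀ i, Memlg γ (p i) ∧ lgNorm γ (p i) ≤ 1) ∧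
      ∀ i j, i ≠ j → 2 * ε ≤ lgNorm γ (p i - p j)} := by
    refine ⟨Real.rpow_pos_of_pos (by norm_num) _, p, ?_, ?_⟩
    · intro i
      refine ⟨hsum i, ?_⟩
      rw [lgNorm, htsum i, Real.one_rpow]
    · intro i j hij
      rw [lgNorm, htsumd i j hij, key2]
  -- the set is bounded above by 2^(1/γ-1)
  have hbdd : ∀ ε ∈ {ε : ℝ | 0 < ε ∧ ∃ p : Fin N → (ℕ → ℝ),
      (∀ i, Memlg γ (p i) ∧ lgNorm γ (p i) ≤ 1) ∧
      ∀ i j, i ≠ j → 2 * ε ≤ lgNorm γ (p i - p j)}, ε ≤ (2:ℝ) ^ (1/γ - 1) := by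
    rintro ε ⟨hεpos, q, hq1, hq2⟩
    set i0 : Fin N := ⟨0, by omega⟩
    set i1 : Fin N := ⟨1, by omega⟩
    have hne : i0 ≠ i1 := by
      intro h
      have := congrArg Fin.val h
      simp [i0, i1] at this
    have hd := hq2 i0 i1 hne
    -- bound the distance
    have hS : ∀ i : Fin N, (∑' n, |q i n| ^ γ) ≤ 1 := by
      intro i
      have h0 : (0:ℝ) ≤ ∑' n, |q i n| ^ γ :=
        tsum_nonneg fun n => Real.rpow_nonneg (abs_nonneg _) _
      have := (hq1 i).2
      rw [lgNorm] at this
      calc (∑' n, |q i n| ^ γ)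
          = ((∑' n, |q i n| ^ γ) ^ (1/γ)) ^ γ := by
            rw [one_div, Real.rpow_inv_rpow h0 hγne]
        _ ≤ 1 ^ γ := Real.rpow_le_rpow (Real.rpow_nonneg h0 _) this hγ.le
        _ = 1 := Real.one_rpow _
    have hpt : ∀ n, |(q i0 - q i1) n| ^ γ ≤ |q i0 n| ^ γ + |q i1 n| ^ γ := by
      intro n
      calc |(q i0 - q i1) n| ^ γ ≤ (|q i0 n| + |q i1 n|) ^ γ := by
            apply Real.rpow_le_rpow (abs_nonneg _) _ hγ.le
            exact abs_sub _ _
        _ ≤ |q i0 n| ^ γ + |q i1 n| ^ γ :=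
            rpow_add_le γ hγ hγ1 (abs_nonneg _) (abs_nonneg _)
    have hsumg : Summable fun n => |q i0 n| ^ γ + |q i1 n| ^ γ :=
      ((hq1 i0).1).add ((hq1 i1).1)
    have hsumd : Summable fun n => |(q i0 - q i1) n| ^ γ :=
      Summable.of_nonneg_of_le (fun n => Real.rpow_nonneg (abs_nonneg _) _) hpt hsumg
    have hT : (∑' n, |(q i0 - q i1) n| ^ γ) ≤ 2 := by
      calc (∑' n, |(q i0 - q i1) n| ^ γ)
          ≤ ∑' n, (|q i0 n| ^ γ + |q i1 n| ^ γ) := Summable.tsum_le_tsum hpt hsumd hsumg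
        _ = (∑' n, |q i0 n| ^ γ) + (∑' n, |q i1 n| ^ γ) :=
            Summable.tsum_add ((hq1 i0).1) ((hq1 i1).1)
        _ ≤ 1 + 1 := add_le_add (hS i0) (hS i1)
        _ = 2 := by norm_num
    have hlg : lgNorm γ (q i0 - q i1) ≤ (2:ℝ) ^ (1/γ) := by
      rw [lgNorm]
      exact Real.rpow_le_rpow
        (tsum_nonneg fun n => Real.rpow_nonneg (abs_nonneg _) _) hT h1γ.le
    have : 2 * ε ≤ 2 * (2:ℝ) ^ (1/γ - 1) := by
      rw [key2]; exact hd.trans hlg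
    linarith
  exact le_csSup ⟨_, hbdd⟩ hmem
end
end

section
/- For 0 < γ ≤ 1, define φ : ℝ² → [0,∞) by φ(x₁,x₂) = |x₁| + |x₂| if x₁x₂ ≤ 0 (i.e., x lies in the second or fourth closed quadrant), and φ(x₁,x₂) = (|x₁|^γ + |x₂|^γ)^{1/γ} if x₁x₂ > 0 (first or third open quadrant). Then φ is a γ-norm on ℝ², i.e., φ(x) = 0 iff x = 0, φ(λx) = |λ|φ(x), and φ(x+y)^γ ≤ φ(x)^γ + φ(y)^γ for all x, y ∈ ℝ². -/
open scoped BigOperators ENNReal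

noncomputable section

/-- The function `φ`: the `ℓ₁` norm on the second and fourth quadrants, the `ℓ_γ` norm
on the open first and third quadrants. -/
def phi (γ : ℝ) : ℝ × ℝ → ℝ := fun x =>
  if x.1 * x.2 ≤ 0 then |x.1| + |x.2|
  else (|x.1| ^ γ + |x.2| ^ γ) ^ (1/γ)

namespace PhiAux

variable {γ : ℝ}

/-- Real version of subadditivity of `t ↦ t ^ γ` for `0 ≤ γ ≤ 1`. -/
lemma rpow_add_le (hγ : 0 ≤ γ) (hγ1 : γ ≤ 1) {a b : ℝ} (ha : 0 ≤ a) (hb : 0 ≤ b) :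
    (a + b) ^ γ ≤ a ^ γ + b ^ γ := by
  have h := NNReal.rpow_add_le_add_rpow ⟨a, ha⟩ ⟨b, hb⟩ hγ hγ1
  have := NNReal.coe_le_coe.2 h
  exact Real.rpow_add_le_add_rpow ha hb hγ hγ1

lemma phi_nonneg (hγ : 0 < γ) (x : ℝ × ℝ) : 0 ≤ phi γ x := by
  unfold phi
  split
  · positivity
  · positivity

/-- On the open first/third quadrant, `phi x ^ γ = |x₁| ^ γ + |x₂| ^ γ`. -/
lemma phi_pow_of_pos (hγ : 0 < γ) {x : ℝ × ℝ} (hx : ¬ x.1 * x.2 ≤ 0) :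
    phi γ x ^ γ = |x.1| ^ γ + |x.2| ^ γ := by
  unfold phi
  rw [if_neg hx]
  have hA : (0:ℝ) ≤ |x.1| ^ γ + |x.2| ^ γ := by positivity
  rw [← Real.rpow_mul hA, one_div, inv_mul_cancel₀ hγ.ne', Real.rpow_one]

/-- `|xᵢ| ^ γ ≤ phi x ^ γ`. -/
lemma abs_fst_rpow_le (hγ : 0 < γ) (hγ1 : γ ≤ 1) (x : ℝ × ℝ) :
    |x.1| ^ γ ≤ phi γ x ^ γ := by
  by_cases hx : x.1 * x.2 ≤ 0
  · unfold phi
    rw [if_pos hx]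
    exact Real.rpow_le_rpow (abs_nonneg _) (by nlinarith [abs_nonneg x.2]) hγ.le
  · rw [phi_pow_of_pos hγ hx]
    nlinarith [Real.rpow_nonneg (abs_nonneg x.2) γ]

lemma abs_snd_rpow_le (hγ : 0 < γ) (hγ1 : γ ≤ 1) (x : ℝ × ℝ) :
    |x.2| ^ γ ≤ phi γ x ^ γ := by
  by_cases hx : x.1 * x.2 ≤ 0
  · unfold phi
    rw [if_pos hx]
    exact Real.rpow_le_rpow (abs_nonneg _) (by nlinarith [abs_nonneg x.1]) hγ.le
  · rw [phi_pow_of_pos hγ hx]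
    nlinarith [Real.rpow_nonneg (abs_nonneg x.1) γ]

/-- `|x₁| + |x₂| ≤ phi x`. -/
lemma l1_le_phi (hγ : 0 < γ) (hγ1 : γ ≤ 1) (x : ℝ × ℝ) :
    |x.1| + |x.2| ≤ phi γ x := by
  by_cases hx : x.1 * x.2 ≤ 0
  · unfold phi; rw [if_pos hx]
  · have h1 : ((|x.1| + |x.2|) ^ γ) ^ (1/γ) ≤ (|x.1| ^ γ + |x.2| ^ γ) ^ (1/γ) := by
      apply Real.rpow_le_rpow (by positivity)
        (rpow_add_le hγ.le hγ1 (abs_nonneg _) (abs_nonneg _)) (by positivity)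
    have h2 : ((|x.1| + |x.2|) ^ γ) ^ (1/γ) = |x.1| + |x.2| := by
      rw [← Real.rpow_mul (by positivity), one_div, mul_inv_cancel₀ hγ.ne', Real.rpow_one]
    unfold phi
    rw [if_neg hx]
    rw [h2] at h1
    exact h1

/-- Core inequality for the γ-triangle inequality when the sum lies in the open first
quadrant and `x` lies in the closed second/fourth quadrant. -/
lemma core (hγ : 0 < γ) (hγ1 : γ ≤ 1) (x₁ x₂ y₁ y₂ Q : ℝ)
    (hx : x₁ * x₂ ≤ 0) (hs1 : 0 < x₁ + y₁) (hs2 : 0 < x₂ + y₂)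
    (hQ0 : 0 ≤ Q)
    (hQ1 : |y₁| ^ γ ≤ Q) (hQ2 : |y₂| ^ γ ≤ Q)
    (hQ : 0 < y₁ * y₂ → |y₁| ^ γ + |y₂| ^ γ ≤ Q) :
    (x₁ + y₁) ^ γ + (x₂ + y₂) ^ γ ≤ (|x₁| + |x₂|) ^ γ + Q := by
  have key : ∀ a₁ a₂ b₁ b₂ : ℝ, 0 ≤ a₁ → a₂ ≤ 0 → 0 < a₁ + b₁ → 0 < a₂ + b₂ →
      |b₁| ^ γ ≤ Q → |b₂| ^ γ ≤ Q → (0 < b₁ * b₂ → |b₁| ^ γ + |b₂| ^ γ ≤ Q) →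
      (a₁ + b₁) ^ γ + (a₂ + b₂) ^ γ ≤ (|a₁| + |a₂|) ^ γ + Q := by
    intro a₁ a₂ b₁ b₂ ha1 ha2 hs1 hs2 hQ1 hQ2 hQ
    have hb2 : 0 < b₂ := by linarith
    by_cases hb1 : b₁ ≤ 0
    · -- then a₁ + b₁ ≤ a₁ ≤ |a₁| + |a₂|, and a₂ + b₂ ≤ b₂
      have h1 : (a₁ + b₁) ^ γ ≤ (|a₁| + |a₂|) ^ γ := by
        apply Real.rpow_le_rpow hs1.le _ hγ.le
        have := abs_nonneg a₂
        rw [abs_of_nonneg ha1]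
        linarith
      have h2 : (a₂ + b₂) ^ γ ≤ Q := by
        refine le_trans ?_ hQ2
        rw [abs_of_pos hb2]
        exact Real.rpow_le_rpow hs2.le (by linarith) hγ.le
      linarith
    · push_neg at hb1
      have hQ' : |b₁| ^ γ + |b₂| ^ γ ≤ Q := hQ (mul_pos hb1 hb2)
      have h1 : (a₁ + b₁) ^ γ ≤ (|a₁| + |a₂|) ^ γ + |b₁| ^ γ := by
        calc (a₁ + b₁) ^ γ ≤ a₁ ^ γ + b₁ ^ γ := rpow_add_le hγ.le hγ1 ha1 hb1.le
          _ ≤ (|a₁| + |a₂|) ^ γ + |b₁| ^ γ := by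
              gcongr
              · rw [abs_of_nonneg ha1]; linarith [abs_nonneg a₂]
              · exact (le_abs_self b₁)
      have h2 : (a₂ + b₂) ^ γ ≤ |b₂| ^ γ := by
        rw [abs_of_pos hb2]
        exact Real.rpow_le_rpow hs2.le (by linarith) hγ.le
      linarith
  rcases le_or_gt x₂ 0 with h2 | h2
  · rcases le_or_gt 0 x₁ with h1 | h1
    · exact key x₁ x₂ y₁ y₂ h1 h2 hs1 hs2 hQ1 hQ2 hQ
    · -- x₁ < 0 and x₂ ≤ 0: then x₁ * x₂ ≥ 0; combined with hx, x₂ = 0... handle: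
      have hx2 : 0 ≤ x₂ := by nlinarith
      have hx2' : x₂ = 0 := le_antisymm h2 hx2
      -- swap roles: x₂ = 0 ≥ ... use key with coordinates swapped
      have := key x₂ x₁ y₂ y₁ hx2 h1.le hs2 hs1 hQ2 hQ1
        (fun h => by rw [add_comm (|y₂| ^ γ)]; exact hQ (by linarith [mul_comm y₁ y₂]))
      rw [add_comm (|x₂|)] at this
      linarith
  · -- x₂ > 0, so x₁ ≤ 0
    have hx1 : x₁ ≤ 0 := by nlinarith
    have := key x₂ x₁ y₂ y₁ h2.le hx1 hs2 hs1 hQ2 hQ1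
      (fun h => by rw [add_comm (|y₂| ^ γ)]; exact hQ (by linarith [mul_comm y₁ y₂]))
    rw [add_comm (|x₂|)] at this
    linarith

lemma phi_neg (x : ℝ × ℝ) : phi γ (-x) = phi γ x := by
  unfold phi
  simp [neg_mul_neg, abs_neg]

/-- Case B: the sum lies in the open first quadrant. -/
lemma caseB (hγ : 0 < γ) (hγ1 : γ ≤ 1) (x y : ℝ × ℝ)
    (hs1 : 0 < x.1 + y.1) (hs2 : 0 < x.2 + y.2) :
    (x.1 + y.1) ^ γ + (x.2 + y.2) ^ γ ≤ phi γ x ^ γ + phi γ y ^ γ := by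
  have hxQ0 : 0 ≤ phi γ x ^ γ := Real.rpow_nonneg (PhiAux.phi_nonneg hγ x) γ
  have hyQ0 : 0 ≤ phi γ y ^ γ := Real.rpow_nonneg (PhiAux.phi_nonneg hγ y) γ
  have hQy1 := PhiAux.abs_fst_rpow_le hγ hγ1 y
  have hQy2 := PhiAux.abs_snd_rpow_le hγ hγ1 y
  have hQx1 := PhiAux.abs_fst_rpow_le hγ hγ1 x
  have hQx2 := PhiAux.abs_snd_rpow_le hγ hγ1 x
  have hQy : 0 < y.1 * y.2 → |y.1| ^ γ + |y.2| ^ γ ≤ phi γ y ^ γ := fun h =>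
    (PhiAux.phi_pow_of_pos hγ (not_le.2 h)).ge
  have hQx : 0 < x.1 * x.2 → |x.1| ^ γ + |x.2| ^ γ ≤ phi γ x ^ γ := fun h =>
    (PhiAux.phi_pow_of_pos hγ (not_le.2 h)).ge
  by_cases hx : x.1 * x.2 ≤ 0
  · calc (x.1 + y.1) ^ γ + (x.2 + y.2) ^ γ ≤ (|x.1| + |x.2|) ^ γ + phi γ y ^ γ :=
        PhiAux.core hγ hγ1 x.1 x.2 y.1 y.2 _ hx hs1 hs2 hyQ0 hQy1 hQy2 hQy
      _ ≤ phi γ x ^ γ + phi γ y ^ γ := by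
          gcongr
          exact PhiAux.l1_le_phi hγ hγ1 x
  · by_cases hy : y.1 * y.2 ≤ 0
    · have := PhiAux.core hγ hγ1 y.1 y.2 x.1 x.2 _ hy
        (by rw [add_comm]; exact hs1) (by rw [add_comm]; exact hs2)
        hxQ0 hQx1 hQx2 hQx
      rw [add_comm y.1 x.1, add_comm y.2 x.2] at this
      calc (x.1 + y.1) ^ γ + (x.2 + y.2) ^ γ ≤ (|y.1| + |y.2|) ^ γ + phi γ x ^ γ := this
        _ ≤ phi γ y ^ γ + phi γ x ^ γ := by
            gcongr
            exact PhiAux.l1_le_phi hγ hγ1 y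
        _ = phi γ x ^ γ + phi γ y ^ γ := add_comm _ _
    · rw [PhiAux.phi_pow_of_pos hγ hx, PhiAux.phi_pow_of_pos hγ hy]
      have g1 : (x.1 + y.1) ^ γ ≤ |x.1| ^ γ + |y.1| ^ γ := by
        calc (x.1 + y.1) ^ γ ≤ (|x.1| + |y.1|) ^ γ :=
              Real.rpow_le_rpow hs1.le (le_trans (le_abs_self _) (abs_add_le _ _)) hγ.le
          _ ≤ |x.1| ^ γ + |y.1| ^ γ :=
              PhiAux.rpow_add_le hγ.le hγ1 (abs_nonneg _) (abs_nonneg _)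
      have g2 : (x.2 + y.2) ^ γ ≤ |x.2| ^ γ + |y.2| ^ γ := by
        calc (x.2 + y.2) ^ γ ≤ (|x.2| + |y.2|) ^ γ :=
              Real.rpow_le_rpow hs2.le (le_trans (le_abs_self _) (abs_add_le _ _)) hγ.le
          _ ≤ |x.2| ^ γ + |y.2| ^ γ :=
              PhiAux.rpow_add_le hγ.le hγ1 (abs_nonneg _) (abs_nonneg _)
      linarith

end PhiAux

theorem phi_isGammaNorm (γ : ℝ) (hγ : 0 < γ) (hγ1 : γ ≤ 1) :
    IsGammaNorm γ (phi γ) := by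
  refine ⟨PhiAux.phi_nonneg hγ, ?_, ?_, ?_⟩
  · -- zero iff zero
    intro x
    constructor
    · intro h
      by_cases hx : x.1 * x.2 ≤ 0
      · unfold phi at h
        rw [if_pos hx] at h
        have h1 := abs_nonneg x.1
        have h2 := abs_nonneg x.2
        have : |x.1| = 0 ∧ |x.2| = 0 := ⟨by linarith, by linarith⟩
        ext
        · exact abs_eq_zero.1 this.1
        · exact abs_eq_zero.1 this.2
      · exfalso
        push_neg at hx
        have h1 : x.1 ≠ 0 := fun h' => by simp [h'] at hx
        have hpos : 0 < |x.1| ^ γ + |x.2| ^ γ := by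
          have : 0 < |x.1| ^ γ := Real.rpow_pos_of_pos (abs_pos.2 h1) γ
          nlinarith [Real.rpow_nonneg (abs_nonneg x.2) γ]
        unfold phi at h
        rw [if_neg (not_le.2 hx)] at h
        exact absurd h (ne_of_gt (Real.rpow_pos_of_pos hpos _))
    · rintro rfl
      unfold phi
      simp
  · -- homogeneity
    intro a x
    rcases eq_or_ne a 0 with rfl | ha
    · simp [phi]
    · have haa : 0 < |a| := abs_pos.2 ha
      have hsign : (a • x).1 * (a • x).2 = a ^ 2 * (x.1 * x.2) := by
        simp [Prod.smul_def, smul_eq_mul]; ring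
      have hsq : 0 < a ^ 2 := by positivity
      by_cases hx : x.1 * x.2 ≤ 0
      · have : (a • x).1 * (a • x).2 ≤ 0 := by rw [hsign]; exact mul_nonpos_of_nonneg_of_nonpos hsq.le hx
        unfold phi
        rw [if_pos this, if_pos hx]
        simp [Prod.smul_def, smul_eq_mul, abs_mul]
        ring
      · have : ¬ (a • x).1 * (a • x).2 ≤ 0 := by
          rw [hsign]; push_neg at hx ⊢; exact mul_pos hsq hx
        unfold phi
        rw [if_neg this, if_neg hx]
        have h1 : |(a • x).1| = |a| * |x.1| := by simp [Prod.smul_def, smul_eq_mul, abs_mul]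
        have h2 : |(a • x).2| = |a| * |x.2| := by simp [Prod.smul_def, smul_eq_mul, abs_mul]
        rw [h1, h2, Real.mul_rpow haa.le (abs_nonneg _), Real.mul_rpow haa.le (abs_nonneg _),
          ← mul_add, Real.mul_rpow (by positivity) (by positivity),
          ← Real.rpow_mul haa.le, one_div, mul_inv_cancel₀ hγ.ne', Real.rpow_one]
  · -- γ-triangle inequality
    intro x y
    set s := x + y with hs
    by_cases hss : s.1 * s.2 ≤ 0
    · -- ℓ₁ case
      have h1 : phi γ s = |s.1| + |s.2| := by unfold phi; rw [if_pos hss]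
      have h2 : phi γ s ≤ phi γ x + phi γ y := by
        rw [h1]
        have hx := PhiAux.l1_le_phi hγ hγ1 x
        have hy := PhiAux.l1_le_phi hγ hγ1 y
        have e1 : s.1 = x.1 + y.1 := rfl
        have e2 : s.2 = x.2 + y.2 := rfl
        calc |s.1| + |s.2| ≤ (|x.1| + |y.1|) + (|x.2| + |y.2|) := by
              rw [e1, e2]; gcongr <;> exact abs_add_le _ _
          _ ≤ phi γ x + phi γ y := by linarith
      calc phi γ s ^ γ ≤ (phi γ x + phi γ y) ^ γ :=
            Real.rpow_le_rpow (PhiAux.phi_nonneg hγ s) h2 hγ.le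
        _ ≤ phi γ x ^ γ + phi γ y ^ γ :=
            PhiAux.rpow_add_le hγ.le hγ1 (PhiAux.phi_nonneg hγ x) (PhiAux.phi_nonneg hγ y)
    · -- sum in open first/third quadrant
      rw [PhiAux.phi_pow_of_pos hγ hss]
      have e1 : s.1 = x.1 + y.1 := rfl
      have e2 : s.2 = x.2 + y.2 := rfl
      push_neg at hss
      rcases (mul_pos_iff.1 hss) with ⟨hs1, hs2⟩ | ⟨hs1, hs2⟩
      · rw [e1, e2, abs_of_pos (e1 ▸ hs1), abs_of_pos (e2 ▸ hs2)]
        exact PhiAux.caseB hγ hγ1 x y (e1 ▸ hs1) (e2 ▸ hs2)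
      · have h1 : |s.1| = (-x).1 + (-y).1 := by
          rw [abs_of_neg hs1, e1]; simp; ring
        have h2 : |s.2| = (-x).2 + (-y).2 := by
          rw [abs_of_neg hs2, e2]; simp; ring
        rw [h1, h2]
        have := PhiAux.caseB hγ hγ1 (-x) (-y)
          (by rw [← h1]; exact abs_pos.2 hs1.ne)
          (by rw [← h2]; exact abs_pos.2 hs2.ne)
        rwa [PhiAux.phi_neg, PhiAux.phi_neg] at this
end
end

section
/- For 0 < γ ≤ 1, define ω : ℝ² → [0,∞) by ω(x₁,x₂) = |x₁| if |x₁| > |x₂|, and ω(x₁,x₂) = (|(x₁+x₂)/2|^γ + |(x₁−x₂)/2|^γ)^{1/γ} if |x₁| ≤ |x₂|. Then ω is a γ-norm on ℝ². -/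
open scoped BigOperators ENNReal

noncomputable section

/-- The rotated γ-norm `ω` on `ℝ²`. -/
def omg (γ : ℝ) : ℝ × ℝ → ℝ := fun x =>
  if |x.2| < |x.1| then |x.1|
  else (|(x.1 + x.2)/2| ^ γ + |(x.1 - x.2)/2| ^ γ) ^ (1/γ)

open scoped NNReal

namespace OmgAux


lemma rpow_subadd {γ : ℝ} (hγ : 0 ≤ γ) (hγ1 : γ ≤ 1) {a b : ℝ} (ha : 0 ≤ a) (hb : 0 ≤ b) :
    (a + b) ^ γ ≤ a ^ γ + b ^ γ := by
  lift a to ℝ≥0 using ha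
  lift b to ℝ≥0 using hb
  exact_mod_cast NNReal.rpow_add_le_add_rpow a b hγ hγ1

/-- γ-th power of the auxiliary norm in rotated coordinates. -/
def P (γ u v : ℝ) : ℝ := if 0 < u * v then (|u| + |v|) ^ γ else |u| ^ γ + |v| ^ γ

lemma le_P {γ : ℝ} (hγ : 0 ≤ γ) (hγ1 : γ ≤ 1) (u v : ℝ) : (|u| + |v|) ^ γ ≤ P γ u v := by
  unfold P; split
  · exact le_refl _
  · exact rpow_subadd hγ hγ1 (abs_nonneg _) (abs_nonneg _)

lemma core1 {γ : ℝ} (hγ : 0 ≤ γ) {u v u' v' : ℝ} (hu : 0 < u) (hv : 0 < v)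
    (hu' : u' < 0) (hv' : v' < 0) (h : (u + u') * (v + v') ≤ 0) :
    |u + u'| ^ γ + |v + v'| ^ γ ≤ (|u| + |v|) ^ γ + (|u'| + |v'|) ^ γ := by
  rw [abs_of_pos hu, abs_of_pos hv, abs_of_neg hu', abs_of_neg hv']
  rcases mul_nonpos_iff.mp h with ⟨h1, h2⟩ | ⟨h1, h2⟩
  · have A : |u + u'| ≤ u + v := by rw [abs_of_nonneg h1]; linarith
    have B : |v + v'| ≤ -u' + -v' := by rw [abs_of_nonpos h2]; linarith
    exact add_le_add (Real.rpow_le_rpow (abs_nonneg _) A hγ)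
      (Real.rpow_le_rpow (abs_nonneg _) B hγ)
  · have A : |u + u'| ≤ -u' + -v' := by rw [abs_of_nonpos h1]; linarith
    have B : |v + v'| ≤ u + v := by rw [abs_of_nonneg h2]; linarith
    calc |u + u'| ^ γ + |v + v'| ^ γ ≤ (-u' + -v') ^ γ + (u + v) ^ γ :=
          add_le_add (Real.rpow_le_rpow (abs_nonneg _) A hγ)
            (Real.rpow_le_rpow (abs_nonneg _) B hγ)
      _ = (u + v) ^ γ + (-u' + -v') ^ γ := by ring

lemma core2 {γ : ℝ} (hγ : 0 ≤ γ) (hγ1 : γ ≤ 1) {u v u' v' : ℝ} (hu : 0 < u) (hv : 0 < v)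
    (hu' : u' ≤ 0) (hv' : 0 ≤ v') (h : (u + u') * (v + v') ≤ 0) :
    |u + u'| ^ γ + |v + v'| ^ γ ≤ (|u| + |v|) ^ γ + (|u'| ^ γ + |v'| ^ γ) := by
  have hvv : 0 < v + v' := by linarith
  have huu : u + u' ≤ 0 := by nlinarith
  have A : |u + u'| ^ γ ≤ |u'| ^ γ := by
    refine Real.rpow_le_rpow (abs_nonneg _) ?_ hγ
    rw [abs_of_nonpos huu, abs_of_nonpos hu']; linarith
  have B : |v + v'| ^ γ ≤ v ^ γ + v' ^ γ := by
    rw [abs_of_pos hvv]; exact rpow_subadd hγ hγ1 hv.le hv'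
  have C : v ^ γ ≤ (|u| + |v|) ^ γ := by
    refine Real.rpow_le_rpow hv.le ?_ hγ
    rw [abs_of_pos hu, abs_of_pos hv]; linarith
  have D : |v'| ^ γ = v' ^ γ := by rw [abs_of_nonneg hv']
  linarith

lemma mixed {γ : ℝ} (hγ : 0 ≤ γ) (hγ1 : γ ≤ 1) {u v u' v' : ℝ} (h1 : 0 < u * v)
    (h2 : u' * v' ≤ 0) (hs : (u + u') * (v + v') ≤ 0) :
    |u + u'| ^ γ + |v + v'| ^ γ ≤ (|u| + |v|) ^ γ + (|u'| ^ γ + |v'| ^ γ) := by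
  rcases mul_pos_iff.mp h1 with ⟨hu, hv⟩ | ⟨hu, hv⟩
  · rcases mul_nonpos_iff.mp h2 with ⟨hu', hv'⟩ | ⟨hu', hv'⟩
    · -- 0 ≤ u', v' ≤ 0 : swap coordinates
      have := core2 hγ hγ1 hv hu hv' hu' (by nlinarith)
      rw [add_comm |v| |u|] at this
      linarith
    · exact core2 hγ hγ1 hu hv hu' hv' hs
  · rcases mul_nonpos_iff.mp h2 with ⟨hu', hv'⟩ | ⟨hu', hv'⟩
    · -- u,v < 0, 0 ≤ u', v' ≤ 0 : flip signs
      have := core2 hγ hγ1 (neg_pos.mpr hu) (neg_pos.mpr hv)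
        (by linarith : -u' ≤ 0) (by linarith : (0:ℝ) ≤ -v') (by nlinarith)
      simp only [← neg_add, abs_neg] at this
      exact this
    · -- u,v < 0, u' ≤ 0 ≤ v' : flip signs and swap coordinates
      have := core2 hγ hγ1 (neg_pos.mpr hv) (neg_pos.mpr hu)
        (by linarith : -v' ≤ 0) (by linarith : (0:ℝ) ≤ -u') (by nlinarith)
      simp only [← neg_add, abs_neg] at this
      rw [add_comm |v| |u|] at this
      linarith

lemma P_triangle {γ : ℝ} (hγ : 0 ≤ γ) (hγ1 : γ ≤ 1) (u v u' v' : ℝ) :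
    P γ (u + u') (v + v') ≤ P γ u v + P γ u' v' := by
  by_cases hs : 0 < (u + u') * (v + v')
  · rw [P, if_pos hs]
    calc (|u + u'| + |v + v'|) ^ γ ≤ ((|u| + |v|) + (|u'| + |v'|)) ^ γ := by
          refine Real.rpow_le_rpow (by positivity) ?_ hγ
          have := abs_add_le u u'; have := abs_add_le v v'; linarith
      _ ≤ (|u| + |v|) ^ γ + (|u'| + |v'|) ^ γ :=
          rpow_subadd hγ hγ1 (by positivity) (by positivity)
      _ ≤ P γ u v + P γ u' v' := add_le_add (le_P hγ hγ1 u v) (le_P hγ hγ1 u' v')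
  · push_neg at hs
    rw [P, if_neg (not_lt.mpr hs)]
    by_cases h1 : 0 < u * v
    · by_cases h2 : 0 < u' * v'
      · rw [P, if_pos h1, P, if_pos h2]
        rcases mul_pos_iff.mp h1 with ⟨hu, hv⟩ | ⟨hu, hv⟩ <;>
          rcases mul_pos_iff.mp h2 with ⟨hu', hv'⟩ | ⟨hu', hv'⟩
        · exact absurd hs (by nlinarith)
        · exact core1 hγ hu hv hu' hv' hs
        · have := core1 hγ hu' hv' hu hv (by nlinarith)
          rw [add_comm u' u, add_comm v' v] at this
          linarith
        · exact absurd hs (by nlinarith)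
      · rw [P, if_pos h1, P, if_neg h2]
        exact mixed hγ hγ1 h1 (not_lt.mp h2) hs
    · by_cases h2 : 0 < u' * v'
      · rw [P, if_neg h1, P, if_pos h2]
        have := mixed hγ hγ1 h2 (not_lt.mp h1) (by nlinarith)
        rw [add_comm u' u, add_comm v' v] at this
        linarith
      · rw [P, if_neg h1, P, if_neg h2]
        have A : |u + u'| ^ γ ≤ |u| ^ γ + |u'| ^ γ :=
          le_trans (Real.rpow_le_rpow (abs_nonneg _) (abs_add_le u u') hγ)
            (rpow_subadd hγ hγ1 (abs_nonneg _) (abs_nonneg _))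
        have B : |v + v'| ^ γ ≤ |v| ^ γ + |v'| ^ γ :=
          le_trans (Real.rpow_le_rpow (abs_nonneg _) (abs_add_le v v') hγ)
            (rpow_subadd hγ hγ1 (abs_nonneg _) (abs_nonneg _))
        linarith




lemma cond_iff (x : ℝ × ℝ) : |x.2| < |x.1| ↔ 0 < ((x.1 + x.2)/2) * ((x.1 - x.2)/2) := by
  rw [← sq_lt_sq]
  constructor <;> intro h <;> nlinarith

lemma omg_pow {γ : ℝ} (hγ : 0 < γ) (x : ℝ × ℝ) :
    (omg γ x) ^ γ = P γ ((x.1 + x.2)/2) ((x.1 - x.2)/2) := by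
  by_cases hb : |x.2| < |x.1|
  · rw [omg]
    rw [if_pos hb, P, if_pos ((cond_iff x).mp hb)]
    congr 1
    rcases mul_pos_iff.mp ((cond_iff x).mp hb) with ⟨h1, h2⟩ | ⟨h1, h2⟩
    · rw [abs_of_pos h1, abs_of_pos h2, abs_of_pos (by linarith : (0:ℝ) < x.1)]; ring
    · rw [abs_of_neg h1, abs_of_neg h2, abs_of_neg (by linarith : x.1 < (0:ℝ))]; ring
  · rw [omg]
    rw [if_neg hb, P, if_neg (fun h => hb ((cond_iff x).mpr h))]
    rw [← Real.rpow_mul (by positivity), one_div_mul_cancel hγ.ne', Real.rpow_one]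

lemma omg_nonneg {γ : ℝ} (x : ℝ × ℝ) : 0 ≤ omg γ x := by
  rw [omg]; split
  · exact abs_nonneg _
  · positivity


end OmgAux

theorem omg_isGammaNorm (γ : ℝ) (hγ : 0 < γ) (hγ1 : γ ≤ 1) :
    IsGammaNorm γ (omg γ) := by
  unfold IsGammaNorm
  refine ⟨fun x => OmgAux.omg_nonneg x, fun x => ?_, fun a x => ?_, fun y z => ?_⟩
  · constructor
    · intro h
      by_cases hb : |x.2| < |x.1|
      · rw [omg] at h; rw [if_pos hb] at h
        rw [h] at hb
        exact absurd hb (not_lt.mpr (abs_nonneg _))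
      · rw [omg] at h; rw [if_neg hb] at h
        rw [Real.rpow_eq_zero (by positivity) (one_div_ne_zero hγ.ne')] at h
        have hA : |(x.1 + x.2)/2| ^ γ = 0 := by
          have := Real.rpow_nonneg (abs_nonneg ((x.1 + x.2)/2)) γ
          have := Real.rpow_nonneg (abs_nonneg ((x.1 - x.2)/2)) γ
          linarith
        have hB : |(x.1 - x.2)/2| ^ γ = 0 := by
          have := Real.rpow_nonneg (abs_nonneg ((x.1 + x.2)/2)) γ
          linarith
        rw [Real.rpow_eq_zero (abs_nonneg _) hγ.ne', abs_eq_zero] at hA hB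
        have h1 : x.1 = 0 := by linarith [hA, hB]
        have h2 : x.2 = 0 := by linarith [hA, hB]
        rw [Prod.ext_iff]; exact ⟨h1, h2⟩
    · rintro rfl
      rw [omg]
      norm_num [Real.zero_rpow hγ.ne', Real.zero_rpow (one_div_ne_zero hγ.ne'), Real.zero_rpow (inv_ne_zero hγ.ne')]
  · by_cases ha : a = 0
    · subst ha
      rw [zero_smul, omg]
      norm_num [Real.zero_rpow hγ.ne', Real.zero_rpow (one_div_ne_zero hγ.ne'), Real.zero_rpow (inv_ne_zero hγ.ne')]
    · have hsm1 : (a • x).1 = a * x.1 := rfl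
      have hsm2 : (a • x).2 = a * x.2 := rfl
      have hcond : |(a • x).2| < |(a • x).1| ↔ |x.2| < |x.1| := by
        rw [hsm1, hsm2, abs_mul, abs_mul]
        exact mul_lt_mul_iff_right₀ (abs_pos.mpr ha)
      by_cases hb : |x.2| < |x.1|
      · rw [omg, omg]
        rw [if_pos (hcond.mpr hb), if_pos hb, hsm1, abs_mul]
      · rw [omg, omg]
        rw [if_neg (fun h => hb (hcond.mp h)), if_neg hb, hsm1, hsm2]
        rw [show (a * x.1 + a * x.2)/2 = a * ((x.1 + x.2)/2) by ring,
            show (a * x.1 - a * x.2)/2 = a * ((x.1 - x.2)/2) by ring,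
            abs_mul, abs_mul,
            Real.mul_rpow (abs_nonneg a) (abs_nonneg _),
            Real.mul_rpow (abs_nonneg a) (abs_nonneg _), ← mul_add,
            Real.mul_rpow (by positivity) (by positivity),
            ← Real.rpow_mul (abs_nonneg a), mul_one_div_cancel hγ.ne', Real.rpow_one]
  · rw [OmgAux.omg_pow hγ, OmgAux.omg_pow hγ, OmgAux.omg_pow hγ]
    have e1 : ((y + z).1 + (y + z).2)/2 = (y.1 + y.2)/2 + (z.1 + z.2)/2 := by
      simp [Prod.fst_add, Prod.snd_add]; ring
    have e2 : ((y + z).1 - (y + z).2)/2 = (y.1 - y.2)/2 + (z.1 - z.2)/2 := by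
      simp [Prod.fst_add, Prod.snd_add]; ring
    rw [e1, e2]
    exact OmgAux.P_triangle hγ.le hγ1 _ _ _ _
end
end

section
/- Let 0 < γ ≤ 1 and let ω be the γ-norm on ℝ² defined by ω(x₁,x₂) = |x₁| if |x₁| > |x₂| and ω(x₁,x₂) = (|(x₁+x₂)/2|^γ + |(x₁−x₂)/2|^γ)^{1/γ} if |x₁| ≤ |x₂|. Let T̃ : ℝ → (ℝ², ω) be defined by T̃(x) = (0, x). Then ‖T̃‖ = 2^{1/γ−1} and e₁(T̃) ≤ 1 = 2^{1−1/γ}‖T̃‖; in particular the constant 2^{1−1/γ} in the lower bound 2^{1−1/γ}‖T‖ ≤ e₁(T) is sharp. -/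
open scoped BigOperators ENNReal

noncomputable section

/-- The map `T̃ : ℝ → ℝ², x ↦ (0, x)`. -/
def Ttilde : ℝ →ₗ[ℝ] ℝ × ℝ := LinearMap.prod 0 LinearMap.id


lemma omg_zero (γ : ℝ) (hγ : 0 < γ) (x : ℝ) : omg γ (0, x) = (2:ℝ) ^ (1/γ - 1) * |x| := by
  have hγ' : γ ≠ 0 := ne_of_gt hγ
  simp only [omg]
  have h1 : ¬ |x| < |(0:ℝ)| := by simp
  rw [if_neg h1]
  have hx2 : (0:ℝ) ≤ |x| / 2 := by positivity
  have : |(0 + x)/2| = |x|/2 := by rw [abs_div]; norm_num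
  rw [this]
  have : |(0 - x)/2| = |x|/2 := by rw [abs_div]; simp [abs_div]
  rw [this]
  have : (|x|/2) ^ γ + (|x|/2) ^ γ = 2 * (|x|/2) ^ γ := by ring
  rw [this, Real.mul_rpow (by norm_num) (Real.rpow_nonneg hx2 γ),
    ← Real.rpow_mul hx2, mul_one_div, div_self hγ', Real.rpow_one]
  rw [show (2:ℝ) ^ (1/γ - 1) = 2 ^ (1/γ) / 2 by
    rw [Real.rpow_sub (by norm_num), Real.rpow_one]]
  ring

lemma Ttilde_apply (x : ℝ) : Ttilde x = (0, x) := rfl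

lemma opNorm_eq (γ : ℝ) (hγ : 0 < γ) :
    opNorm (fun t : ℝ => |t|) (omg γ) Ttilde = (2 : ℝ) ^ (1/γ - 1) := by
  have hc : (0:ℝ) < (2:ℝ) ^ (1/γ - 1) := Real.rpow_pos_of_pos (by norm_num) _
  have hub : ∀ r ∈ {r : ℝ | ∃ x : ℝ, |x| ≤ 1 ∧ r = omg γ (Ttilde x)},
      r ≤ (2:ℝ) ^ (1/γ - 1) := by
    rintro r ⟨x, hx, rfl⟩
    rw [Ttilde_apply, omg_zero γ hγ]
    calc (2:ℝ) ^ (1/γ - 1) * |x| ≤ (2:ℝ) ^ (1/γ - 1) * 1 := by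
          exact mul_le_mul_of_nonneg_left hx hc.le
      _ = _ := mul_one _
  have hmem : (2:ℝ) ^ (1/γ - 1) ∈ {r : ℝ | ∃ x : ℝ, |x| ≤ 1 ∧ r = omg γ (Ttilde x)} := by
    refine ⟨1, by norm_num, ?_⟩
    rw [Ttilde_apply, omg_zero γ hγ]
    norm_num
  apply le_antisymm
  · exact csSup_le ⟨_, hmem⟩ hub
  · exact le_csSup ⟨_, hub⟩ hmem

theorem first_entropy_sharp (γ : ℝ) (hγ : 0 < γ) (hγ1 : γ ≤ 1) :
    opNorm (fun t : ℝ => |t|) (omg γ) Ttilde = (2 : ℝ) ^ (1/γ - 1) ∧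
    entropy (fun t : ℝ => |t|) (omg γ) Ttilde 1 ≤ 1 ∧
    (1 : ℝ) = (2 : ℝ) ^ (1 - 1/γ) * opNorm (fun t : ℝ => |t|) (omg γ) Ttilde := by
  have hγ' : γ ≠ 0 := ne_of_gt hγ
  refine ⟨opNorm_eq γ hγ, ?_, ?_⟩
  · -- entropy ≤ 1
    unfold entropy
    apply csInf_le
    · refine ⟨0, ?_⟩
      rintro ε ⟨hε, -⟩
      exact hε.le
    · refine ⟨one_pos, fun _ => (1, 0), fun x hx => ⟨0, ?_⟩⟩
      rw [Ttilde_apply]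
      have h1 : ((0:ℝ), x) - (1, 0) = (-1, x) := by
        simp [Prod.ext_iff]
      rw [h1]
      simp only [omg]
      by_cases hlt : |x| < |(-1:ℝ)|
      · rw [if_pos hlt]; norm_num
      · rw [if_neg hlt]
        have hx1 : |x| = 1 := by
          simp only [abs_neg, abs_one] at hlt
          exact le_antisymm hx (not_lt.mp hlt)
        rcases abs_eq (by norm_num : (0:ℝ) ≤ 1) |>.mp hx1 with h | h
        · subst h
          norm_num [Real.zero_rpow hγ', Real.one_rpow]
        · subst h
          norm_num [Real.zero_rpow hγ', Real.one_rpow]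
  · rw [opNorm_eq γ hγ, ← Real.rpow_add (by norm_num : (0:ℝ) < 2)]
    norm_num
end
end

section
/- Let 0 < γ < 1 < β < α < 2^{1/γ−1} and let X be any quasi-Banach space. Then there exists a constant C(α,β,γ) > 2^{1−1/γ} such that every bounded linear operator T : X → ℓ_γ satisfies e₁(T) ≥ C(α,β,γ)‖T‖. In particular, the sharpness of the bound e₁(T) ≥ 2^{1−1/γ}‖T‖ cannot be witnessed by operators into ℓ_γ. -/
open scoped BigOperators ENNReal

noncomputable section

namespace NoSharp

open scoped NNReal

variable {γ : ℝ}

lemma le_rpow_self (hγ0 : 0 < γ) (hγ1 : γ ≤ 1) {c : ℝ} (h0 : 0 ≤ c) (h1 : c ≤ 1) :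
    c ≤ c ^ γ := by
  rcases eq_or_lt_of_le h0 with h | h
  · simp [← h, Real.rpow_nonneg]
  · calc c = c ^ (1:ℝ) := (Real.rpow_one c).symm
      _ ≤ c ^ γ := Real.rpow_le_rpow_of_exponent_ge h h1 hγ1

lemma chord (hγ0 : 0 < γ) (hγ1 : γ ≤ 1) {c : ℝ} (h0 : 0 ≤ c) (h1 : c ≤ 1) :
    1 + ((2:ℝ)^γ - 1) * c ≤ (1 + c)^γ := by
  have h := (Real.concaveOn_rpow hγ0.le hγ1).2 (Set.mem_Ici.2 (by norm_num : (0:ℝ) ≤ 1))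
    (Set.mem_Ici.2 (by norm_num : (0:ℝ) ≤ 2)) (by linarith : (0:ℝ) ≤ 1 - c) h0 (by ring)
  simp only [smul_eq_mul] at h
  rw [Real.one_rpow, show (1-c)*1 + c*2 = 1 + c by ring] at h
  linarith

lemma add_rpow_le (hγ0 : 0 < γ) (hγ1 : γ ≤ 1) {x y : ℝ} (hx : 0 ≤ x) (hy : 0 ≤ y) :
    (x + y) ^ γ ≤ x ^ γ + y ^ γ := by
  have h := NNReal.rpow_add_le_add_rpow (⟨x, hx⟩ : ℝ≥0) (⟨y, hy⟩ : ℝ≥0) hγ0.le hγ1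
  exact_mod_cast h

lemma scalar_unit (hγ0 : 0 < γ) (hγ1 : γ < 1) {c : ℝ} (h0 : 0 ≤ c) (h1 : c ≤ 1) :
    (2:ℝ)^γ ≤ 2^(γ-1) * ((1-c)^γ + (1+c)^γ) + (1 - ((2:ℝ)^(γ-1))^2) * c^γ := by
  set t := (2:ℝ)^(γ-1) with htdef
  have htpos : 0 < t := Real.rpow_pos_of_pos two_pos _
  have ht1 : t ≤ 1 := Real.rpow_le_one_of_one_le_of_nonpos (by norm_num) (by linarith)
  have h2γ : (2:ℝ)^γ = 2 * t := by
    have e := Real.rpow_add two_pos 1 (γ-1)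
    simp only [Real.rpow_one] at e
    rw [htdef, ← e]; norm_num
  have hc1 : 1 - c ≤ (1-c)^γ := le_rpow_self hγ0 hγ1.le (by linarith) (by linarith)
  have hc2 : c ≤ c^γ := le_rpow_self hγ0 hγ1.le h0 h1
  have hc3 : 1 + (2*t - 1)*c ≤ (1+c)^γ := by
    have h := chord hγ0 hγ1.le h0 h1; rwa [h2γ] at h
  rw [h2γ]
  nlinarith [mul_le_mul_of_nonneg_left hc1 htpos.le, mul_le_mul_of_nonneg_left hc3 htpos.le,
    mul_le_mul_of_nonneg_left hc2 (by nlinarith : (0:ℝ) ≤ 1 - t^2),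
    mul_nonneg h0 (sq_nonneg (t-1))]

lemma scalar_nn (hγ0 : 0 < γ) (hγ1 : γ < 1) {A B : ℝ} (hA : 0 ≤ A) (hB : 0 ≤ B) :
    (2*A)^γ ≤ 2^(γ-1) * (|A-B|^γ + (A+B)^γ) + (1 - ((2:ℝ)^(γ-1))^2) * B^γ := by
  set t := (2:ℝ)^(γ-1) with htdef
  have htpos : 0 < t := Real.rpow_pos_of_pos two_pos _
  have ht1 : t ≤ 1 := Real.rpow_le_one_of_one_le_of_nonpos (by norm_num) (by linarith)
  have h2γ : (2:ℝ)^γ = 2 * t := by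
    have e := Real.rpow_add two_pos 1 (γ-1)
    simp only [Real.rpow_one] at e
    rw [htdef, ← e]; norm_num
  rcases le_total B A with hBA | hAB
  · -- B ≤ A
    rcases eq_or_lt_of_le hA with h0A | h0A
    · have hB0 : B = 0 := le_antisymm (h0A ▸ hBA) hB
      simp [← h0A, hB0, Real.zero_rpow hγ0.ne']
    · have hc0 : 0 ≤ B / A := div_nonneg hB h0A.le
      have hc1 : B / A ≤ 1 := (div_le_one h0A).2 hBA
      have key := scalar_unit hγ0 hγ1 hc0 hc1
      have hAγ : (0:ℝ) < A ^ γ := Real.rpow_pos_of_pos h0A _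
      have h := mul_le_mul_of_nonneg_right key hAγ.le
      have e0 : (2:ℝ)^γ * A^γ = (2*A)^γ := (Real.mul_rpow (by norm_num) hA).symm
      have e1 : (1 - B/A)^γ * A^γ = (A-B)^γ := by
        rw [← Real.mul_rpow (by linarith) hA]
        congr 1; field_simp
      have e2 : (1 + B/A)^γ * A^γ = (A+B)^γ := by
        rw [← Real.mul_rpow (by linarith) hA]
        congr 1; field_simp
      have e3 : (B/A)^γ * A^γ = B^γ := by
        rw [← Real.mul_rpow hc0 hA]
        congr 1; field_simp
      have habs : |A - B| = A - B := abs_of_nonneg (by linarith)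
      rw [habs]
      calc (2*A)^γ = (2:ℝ)^γ * A^γ := by rw [e0]
        _ ≤ (t * ((1-B/A)^γ + (1+B/A)^γ) + (1 - t^2) * (B/A)^γ) * A^γ := h
        _ = t * ((1-B/A)^γ * A^γ + (1+B/A)^γ * A^γ) + (1 - t^2) * ((B/A)^γ * A^γ) := by ring
        _ = t * ((A-B)^γ + (A+B)^γ) + (1 - t^2) * B^γ := by rw [e1, e2, e3]
  · -- A ≤ B
    have h1 : (2*A)^γ ≤ (A+B)^γ := Real.rpow_le_rpow (by linarith) (by linarith) hγ0.le
    have h2 : A^γ ≤ B^γ := Real.rpow_le_rpow hA hAB hγ0.le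
    have h3 : (0:ℝ) ≤ |A-B|^γ := Real.rpow_nonneg (abs_nonneg _) _
    have h4 : (0:ℝ) ≤ A^γ := Real.rpow_nonneg hA _
    have e0 : (2*A)^γ = 2 * t * A^γ := by
      rw [Real.mul_rpow (by norm_num) hA, h2γ]
    nlinarith [mul_le_mul_of_nonneg_left h1 htpos.le,
      mul_le_mul_of_nonneg_left h2 (by nlinarith : (0:ℝ) ≤ 1 - t^2),
      mul_nonneg (sq_nonneg (t-1)) h4]

lemma scalar (hγ0 : 0 < γ) (hγ1 : γ < 1) (a b : ℝ) :
    (2*|a|)^γ ≤ 2^(γ-1) * (|a-b|^γ + |a+b|^γ) + (1 - ((2:ℝ)^(γ-1))^2) * |b|^γ := by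
  have key := scalar_nn hγ0 hγ1 (abs_nonneg a) (abs_nonneg b)
  have h : |a-b|^γ + |a+b|^γ = |(|a| - |b|)|^γ + (|a|+|b|)^γ := by
    rcases le_total 0 a with ha | ha <;> rcases le_total 0 b with hb | hb
    · rw [abs_of_nonneg ha, abs_of_nonneg hb, abs_of_nonneg (add_nonneg ha hb)]
    · rw [abs_of_nonneg ha, abs_of_nonpos hb, abs_of_nonneg (by linarith : (0:ℝ) ≤ a - b),
        show a - -b = a + b by ring, show a + -b = a - b by ring, add_comm]
    · rw [abs_of_nonpos ha, abs_of_nonneg hb, abs_of_nonpos (by linarith : a - b ≤ 0),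
        show -a - b = -(a+b) by ring, abs_neg, show -a + b = -(a - b) by ring, add_comm]
    · rw [abs_of_nonpos ha, abs_of_nonpos hb, abs_of_nonpos (by linarith : a + b ≤ 0),
        show -a - -b = -(a-b) by ring, abs_neg, show -a + -b = -(a + b) by ring]
  rw [h]; exact key


lemma lgNorm_nonneg (γ : ℝ) (x : ℕ → ℝ) : 0 ≤ lgNorm γ x :=
  Real.rpow_nonneg (tsum_nonneg fun i => Real.rpow_nonneg (abs_nonneg _) _) _

lemma tsum_le_of_lgNorm (hγ0 : 0 < γ) {v : ℕ → ℝ} {ε : ℝ} (hv : lgNorm γ v ≤ ε) :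
    (∑' i, |v i| ^ γ) ≤ ε ^ γ := by
  have hnn : 0 ≤ ∑' i, |v i| ^ γ := tsum_nonneg fun i => Real.rpow_nonneg (abs_nonneg _) _
  have h := Real.rpow_le_rpow (Real.rpow_nonneg hnn _) hv hγ0.le
  rwa [← Real.rpow_mul hnn, one_div_mul_cancel hγ0.ne', Real.rpow_one] at h

lemma core (hγ0 : 0 < γ) (hγ1 : γ < 1) {u y : ℕ → ℝ}
    (hu : Summable fun i => |u i| ^ γ) (hy : Summable fun i => |y i| ^ γ) {ε : ℝ}
    (h1 : lgNorm γ (u - y) ≤ ε) (h2 : lgNorm γ (-u - y) ≤ ε) (h3 : lgNorm γ (0 - y) ≤ ε) :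
    ((2:ℝ)^γ / (2 * (2:ℝ)^(γ-1) + 1 - ((2:ℝ)^(γ-1))^2)) ^ (1/γ) * lgNorm γ u ≤ ε := by
  set t := (2:ℝ)^(γ-1) with htdef
  set f := 2 * t + 1 - t^2 with hfdef
  have htpos : 0 < t := Real.rpow_pos_of_pos two_pos _
  have htlt1 : t < 1 := Real.rpow_lt_one_of_one_lt_of_neg one_lt_two (by linarith)
  have hμ : (0:ℝ) ≤ 1 - t^2 := by nlinarith
  have hfpos : 0 < f := by nlinarith
  have h2γ : (2:ℝ)^γ = 2 * t := by
    have e := Real.rpow_add two_pos 1 (γ-1)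
    simp only [Real.rpow_one] at e
    rw [htdef, ← e]; norm_num
  have h2γpos : (0:ℝ) < (2:ℝ)^γ := Real.rpow_pos_of_pos two_pos _
  have hε0 : 0 ≤ ε := le_trans (lgNorm_nonneg γ _) h3
  -- summability of the three families
  have hbound : ∀ (w : ℕ → ℝ), (∀ i, |w i| ≤ |u i| + |y i|) → Summable fun i => |w i| ^ γ := by
    intro w hw
    refine Summable.of_nonneg_of_le (fun i => Real.rpow_nonneg (abs_nonneg _) _)
      (fun i => ?_) (hu.add hy)
    calc |w i| ^ γ ≤ (|u i| + |y i|) ^ γ :=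
          Real.rpow_le_rpow (abs_nonneg _) (hw i) hγ0.le
      _ ≤ |u i| ^ γ + |y i| ^ γ := add_rpow_le hγ0 hγ1.le (abs_nonneg _) (abs_nonneg _)
  have hs : Summable fun i => |u i - y i| ^ γ := hbound _ fun i => abs_sub _ _
  have hp : Summable fun i => |u i + y i| ^ γ := hbound _ fun i => abs_add_le _ _
  -- the three tsum bounds
  have hS : (∑' i, |u i - y i| ^ γ) ≤ ε ^ γ := tsum_le_of_lgNorm hγ0 h1
  have hP : (∑' i, |u i + y i| ^ γ) ≤ ε ^ γ := by
    have h := tsum_le_of_lgNorm hγ0 h2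
    have e : ∀ i, |(-u - y) i| = |u i + y i| := by
      intro i
      rw [show (-u - y) i = -(u i + y i) by simp [Pi.sub_apply, Pi.neg_apply]; ring, abs_neg]
    simpa only [e] using h
  have hR : (∑' i, |y i| ^ γ) ≤ ε ^ γ := by
    have h := tsum_le_of_lgNorm hγ0 h3
    have e : ∀ i, |((0:ℕ → ℝ) - y) i| = |y i| := by
      intro i
      rw [show ((0:ℕ → ℝ) - y) i = -(y i) by simp [Pi.sub_apply], abs_neg]
    simpa only [e] using h
  -- pointwise inequality summed
  have key : ∀ i, (2:ℝ)^γ * |u i| ^ γ ≤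
      t * (|u i - y i| ^ γ + |u i + y i| ^ γ) + (1 - t^2) * |y i| ^ γ := by
    intro i
    have h := scalar hγ0 hγ1 (u i) (y i)
    rwa [Real.mul_rpow (by norm_num) (abs_nonneg _)] at h
  have hsum := Summable.tsum_le_tsum key (hu.mul_left _) (((hs.add hp).mul_left t).add (hy.mul_left _))
  rw [tsum_mul_left, Summable.tsum_add ((hs.add hp).mul_left t) (hy.mul_left _), tsum_mul_left,
    tsum_mul_left, Summable.tsum_add hs hp] at hsum
  set U := ∑' i, |u i| ^ γ with hUdef
  have hUnn : 0 ≤ U := tsum_nonneg fun i => Real.rpow_nonneg (abs_nonneg _) _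
  have hεγ : 0 ≤ ε ^ γ := Real.rpow_nonneg hε0 _
  have hf : (2:ℝ)^γ * U ≤ f * ε ^ γ := by
    have hSP : (∑' i, |u i - y i| ^ γ) + (∑' i, |u i + y i| ^ γ) ≤ 2 * ε ^ γ := by linarith
    nlinarith [mul_le_mul_of_nonneg_left hSP htpos.le,
      mul_le_mul_of_nonneg_left hR hμ]
  have hU : U ≤ f / (2:ℝ)^γ * ε ^ γ := by
    rw [div_mul_eq_mul_div, le_div_iff₀ h2γpos]; nlinarith
  have hfin : U ^ (1/γ) ≤ (f / (2:ℝ)^γ) ^ (1/γ) * ε := by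
    have h := Real.rpow_le_rpow hUnn hU (by positivity : (0:ℝ) ≤ 1/γ)
    rwa [Real.mul_rpow (by positivity) hεγ, ← Real.rpow_mul hε0, mul_one_div,
      div_self hγ0.ne', Real.rpow_one] at h
  have hprod : ((2:ℝ)^γ / f) ^ (1/γ) * (f / (2:ℝ)^γ) ^ (1/γ) = 1 := by
    rw [← Real.mul_rpow (by positivity) (by positivity),
      show (2:ℝ)^γ / f * (f / (2:ℝ)^γ) = 1 by field_simp, Real.one_rpow]
  have hCcnn : (0:ℝ) ≤ ((2:ℝ)^γ / f) ^ (1/γ) := Real.rpow_nonneg (by positivity) _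
  calc ((2:ℝ)^γ / f) ^ (1/γ) * lgNorm γ u
      ≤ ((2:ℝ)^γ / f) ^ (1/γ) * ((f / (2:ℝ)^γ) ^ (1/γ) * ε) :=
        mul_le_mul_of_nonneg_left hfin hCcnn
    _ = (((2:ℝ)^γ / f) ^ (1/γ) * (f / (2:ℝ)^γ) ^ (1/γ)) * ε := by ring
    _ = ε := by rw [hprod, one_mul]

end NoSharp

open NoSharp in
theorem no_sharpness_in_lg (γ β α : ℝ) (hγ0 : 0 < γ) (hγ1 : γ < 1)
    (hβ : 1 < β) (hβα : β < α) (hα : α < (2:ℝ) ^ (1/γ - 1))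
    (X : Type*) [AddCommGroup X] [Module ℝ X] (C : ℝ) (NX : X → ℝ)
    (hNX : IsQuasiNorm C NX) (hXc : NormComplete NX) :
    ∃ Cc : ℝ, (2:ℝ) ^ (1 - 1/γ) < Cc ∧
      ∀ T : X →ₗ[ℝ] (ℕ → ℝ), (∀ x, Memlg γ (T x)) →
        (∃ M : ℝ, ∀ x, lgNorm γ (T x) ≤ M * NX x) →
        Cc * sSup {r : ℝ | ∃ x : X, NX x ≤ 1 ∧ r = lgNorm γ (T x)} ≤
          sInf {ε : ℝ | 0 < ε ∧ ∃ y : ℕ → ℝ, Memlg γ y ∧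
            ∀ x : X, NX x ≤ 1 → lgNorm γ (T x - y) ≤ ε} := by
  obtain ⟨hC1, hNXnn, hNX0, hNXsmul, hNXtri⟩ := hNX
  set t := (2:ℝ)^(γ-1) with htdef
  set f := 2 * t + 1 - t^2 with hfdef
  have htpos : 0 < t := Real.rpow_pos_of_pos two_pos _
  have htlt1 : t < 1 := Real.rpow_lt_one_of_one_lt_of_neg one_lt_two (by linarith)
  have hfpos : 0 < f := by nlinarith
  have h2γ : (2:ℝ)^γ = 2 * t := by
    have e := Real.rpow_add two_pos 1 (γ-1)
    simp only [Real.rpow_one] at e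
    rw [htdef, ← e]; norm_num
  have h2γpos : (0:ℝ) < (2:ℝ)^γ := Real.rpow_pos_of_pos two_pos _
  set Cc := ((2:ℝ)^γ / f) ^ (1/γ) with hCcdef
  have hCcpos : 0 < Cc := Real.rpow_pos_of_pos (by positivity) _
  refine ⟨Cc, ?_, ?_⟩
  · -- Cc beats 2^(1-1/γ)
    have hbase : t < (2:ℝ)^γ / f := by
      rw [lt_div_iff₀ hfpos]
      nlinarith [mul_pos (sub_pos.2 htlt1) (sub_pos.2 htlt1)]
    have h := Real.rpow_lt_rpow htpos.le hbase (by positivity : (0:ℝ) < 1/γ)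
    calc (2:ℝ) ^ (1 - 1/γ) = t ^ (1/γ) := by
          rw [htdef, ← Real.rpow_mul (by norm_num : (0:ℝ) ≤ 2)]
          congr 1; field_simp
      _ < Cc := h
  · intro T hmem ⟨M, hM⟩
    set S := {r : ℝ | ∃ x : X, NX x ≤ 1 ∧ r = lgNorm γ (T x)} with hSdef
    set E := {ε : ℝ | 0 < ε ∧ ∃ y : ℕ → ℝ, Memlg γ y ∧
      ∀ x : X, NX x ≤ 1 → lgNorm γ (T x - y) ≤ ε} with hEdef
    have hNX0' : NX 0 = 0 := (hNX0 0).2 rfl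
    -- E is nonempty
    have hEne : (max M 1) ∈ E := by
      refine ⟨lt_of_lt_of_le one_pos (le_max_right _ _), 0, ?_, ?_⟩
      · have : (fun i => |(0:ℕ → ℝ) i| ^ γ) = fun _ => (0:ℝ) := by
          funext i; simp [Real.zero_rpow hγ0.ne']
        unfold Memlg; rw [this]; exact summable_zero
      · intro x hx
        rw [sub_zero]
        rcases le_total 0 M with hM0 | hM0
        · exact le_trans (hM x) (le_trans (mul_le_of_le_one_right hM0 hx) (le_max_left _ _))
        · have : M * NX x ≤ 0 := mul_nonpos_of_nonpos_of_nonneg hM0 (hNXnn x)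
          exact le_trans (hM x) (le_trans this (le_trans zero_le_one (le_max_right _ _)))
    have hInn : 0 ≤ sInf E := Real.sInf_nonneg fun ε hε => hε.1.le
    -- every element of S, scaled by Cc, is below every element of E
    have hmain : ∀ r ∈ S, Cc * r ≤ sInf E := by
      rintro r ⟨x, hx, rfl⟩
      refine le_csInf ⟨max M 1, hEne⟩ ?_
      rintro ε ⟨hεpos, y, hymem, hcov⟩
      have h1 : lgNorm γ (T x - y) ≤ ε := hcov x hx
      have h2 : lgNorm γ (-(T x) - y) ≤ ε := by
        have hnx : NX (-x) ≤ 1 := by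
          have e := hNXsmul (-1) x
          rw [neg_one_smul] at e
          simpa [e] using hx
        have := hcov (-x) hnx
        rwa [map_neg] at this
      have h3 : lgNorm γ ((0:ℕ → ℝ) - y) ≤ ε := by
        have := hcov 0 (by rw [hNX0']; exact zero_le_one)
        rwa [map_zero] at this
      exact core hγ0 hγ1 (hmem x) hymem h1 h2 h3
    have hsup : sSup S ≤ sInf E / Cc := by
      refine Real.sSup_le (fun r hr => ?_) (div_nonneg hInn hCcpos.le)
      rw [le_div_iff₀ hCcpos]
      have := hmain r hr
      linarith [this, mul_comm Cc r]
    calc Cc * sSup S ≤ Cc * (sInf E / Cc) := mul_le_mul_of_nonneg_left hsup hCcpos.le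
      _ = sInf E := by field_simp
end
end

section
/- Let E be an n-dimensional γ-Banach space with a 1-unconditional basis satisfying condition (Q_γ): for all u, v ∈ [0,∞)ⁿ, sup_{x ∈ Q_{u,v}} ‖x‖_E^γ ≤ ‖u‖_E^γ + ‖v‖_E^γ, where Q_{u,v} = ∏_{i=1}^n [M_i − m_i, M_i + m_i] with m_i = min(u_i,v_i), M_i = max(u_i,v_i). Let X₁, ..., X_n be Banach spaces and define τ on ∏X_i by τ(x) = ‖(‖x₁‖, ..., ‖x_n‖)‖_E. Then τ is a γ-norm on ∏X_i. -/
open scoped BigOperators ENNReal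

noncomputable section

theorem conditionQ_gives_gammaNorm (γ : ℝ) (hγ : 0 < γ) (hγ1 : γ ≤ 1) (n : ℕ)
    (N : (Fin n → ℝ) → ℝ) (hN : IsGammaNorm γ N)
    (hUncond : ∀ a : Fin n → ℝ, N a = N (fun i => |a i|))
    (hQ : ∀ u v : Fin n → ℝ, (∀ i, 0 ≤ u i) → (∀ i, 0 ≤ v i) →
      ∀ x : Fin n → ℝ,
        (∀ i, max (u i) (v i) - min (u i) (v i) ≤ x i ∧
          x i ≤ max (u i) (v i) + min (u i) (v i)) →
        N x ^ γ ≤ N u ^ γ + N v ^ γ)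
    (E : Fin n → Type*) [∀ i, NormedAddCommGroup (E i)] [∀ i, NormedSpace ℝ (E i)]
    [∀ i, CompleteSpace (E i)] :
    IsGammaNorm γ (fun x : (∀ i, E i) => N (fun i => ‖x i‖)) := by
  obtain ⟨hpos, hzero, hsmul, _⟩ := hN
  refine ⟨fun x => hpos _, ?_, ?_, ?_⟩
  · intro x
    rw [hzero]
    constructor
    · intro h
      funext i
      have := congrFun h i
      simpa using this
    · intro h; subst h; funext i; simp
  · intro a x
    have h : (fun i => ‖(a • x) i‖) = |a| • (fun i => ‖x i‖) := by
      funext i; simp [norm_smul, Real.norm_eq_abs]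
    simp only [h, hsmul, abs_abs]
  · intro x y
    refine hQ (fun i => ‖x i‖) (fun i => ‖y i‖) (fun i => norm_nonneg _)
      (fun i => norm_nonneg _) (fun i => ‖(x + y) i‖) (fun i => ?_)
    constructor
    · have h1 : |‖x i‖ - ‖-(y i)‖| ≤ ‖x i - -(y i)‖ := abs_norm_sub_norm_le _ _
      rw [norm_neg, sub_neg_eq_add] at h1
      calc max ‖x i‖ ‖y i‖ - min ‖x i‖ ‖y i‖ = |‖x i‖ - ‖y i‖| := by rw [max_sub_min_eq_abs, abs_sub_comm]
        _ ≤ ‖(x + y) i‖ := h1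
    · calc ‖(x + y) i‖ ≤ ‖x i‖ + ‖y i‖ := norm_add_le _ _
        _ = max ‖x i‖ ‖y i‖ + min ‖x i‖ ‖y i‖ := (max_add_min _ _).symm
end
end

section
/- There exist a Banach space X, a γ-Banach space Y (0 < γ ≤ 1), and a nonzero bounded linear operator T : X → Y such that e_k(T) = 2^{1−1/γ}‖T‖ for every k ∈ ℕ. Concretely, one may take X = ℓ_p (1 ≤ p ≤ ∞), Y = ℝ × X with γ-norm ϑ(ξ, x) = ω(|ξ|, ‖x‖_X) where ω is the rotated γ-norm on ℝ², and T(x) = (0, x); then ‖T‖ = 2^{1/γ−1} and e_k(T) = 1 for all k. -/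
open scoped BigOperators ENNReal

noncomputable section

open Real
open scoped NNReal
namespace ESharp

variable {γ : ℝ}

lemma rpow_subadd (hγ : 0 < γ) (hγ1 : γ ≤ 1) {x y : ℝ} (hx : 0 ≤ x) (hy : 0 ≤ y) :
    (x + y) ^ γ ≤ x ^ γ + y ^ γ := by
  have h := NNReal.rpow_add_le_add_rpow x.toNNReal y.toNNReal hγ.le hγ1
  have h' : ((x.toNNReal : ℝ) + (y.toNNReal : ℝ)) ^ γ ≤
      (x.toNNReal : ℝ) ^ γ + (y.toNNReal : ℝ) ^ γ := by exact_mod_cast h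
  rwa [Real.coe_toNNReal x hx, Real.coe_toNNReal y hy] at h' 

lemma rpow_abs_subadd (hγ : 0 < γ) (hγ1 : γ ≤ 1) (x y : ℝ) :
    |x + y| ^ γ ≤ |x| ^ γ + |y| ^ γ :=
  le_trans (Real.rpow_le_rpow (abs_nonneg _) (abs_add_le x y) hγ.le)
    (rpow_subadd hγ hγ1 (abs_nonneg x) (abs_nonneg y))

/-- ω^γ -/
def wg (γ a s : ℝ) : ℝ :=
  if s < |a| then |a| ^ γ else ((s + |a|) / 2) ^ γ + ((s - |a|) / 2) ^ γ

lemma wg_nonneg (hγ : 0 < γ) {a s : ℝ} (hs : 0 ≤ s) : 0 ≤ wg γ a s := by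
  unfold wg; split
  · positivity
  · rename_i h
    push_neg at h
    have h1 : 0 ≤ (s + |a|) / 2 := by positivity
    have h2 : 0 ≤ (s - |a|) / 2 := by linarith
    positivity

lemma wg_eq_zero (hγ : 0 < γ) {a s : ℝ} (hs : 0 ≤ s) : wg γ a s = 0 ↔ a = 0 ∧ s = 0 := by
  unfold wg
  split
  · rename_i h
    constructor
    · intro h0
      have ha0 : |a| = 0 := (Real.rpow_eq_zero (abs_nonneg a) hγ.ne').mp h0
      exact absurd h (by rw [ha0]; linarith)
    · rintro ⟨rfl, rfl⟩; simp at h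
  · rename_i h
    push_neg at h
    have h1 : 0 ≤ (s + |a|) / 2 := by positivity
    have h2 : 0 ≤ (s - |a|) / 2 := by linarith
    constructor
    · intro h0
      have t1 : (0:ℝ) ≤ ((s + |a|) / 2) ^ γ := Real.rpow_nonneg h1 γ
      have t2 : (0:ℝ) ≤ ((s - |a|) / 2) ^ γ := Real.rpow_nonneg h2 γ
      have e1 : ((s + |a|) / 2) ^ γ = 0 := by linarith
      have e2 : ((s - |a|) / 2) ^ γ = 0 := by linarith
      have f1 := (Real.rpow_eq_zero h1 hγ.ne').mp e1
      have f2 := (Real.rpow_eq_zero h2 hγ.ne').mp e2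
      have ha := abs_nonneg a
      constructor
      · have : |a| = 0 := by linarith
        exact abs_eq_zero.mp this
      · linarith
    · rintro ⟨rfl, rfl⟩
      simp [Real.zero_rpow hγ.ne']

lemma wg_smul (hγ : 0 < γ) {a s : ℝ} (hs : 0 ≤ s) (r : ℝ) :
    wg γ (r * a) (|r| * s) = |r| ^ γ * wg γ a s := by
  rcases eq_or_ne r 0 with rfl | hr
  · simp [wg, Real.zero_rpow hγ.ne', abs_nonneg]
  have hr' : 0 < |r| := abs_pos.mpr hr
  unfold wg
  rw [abs_mul]
  by_cases h : s < |a|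
  · rw [if_pos ((mul_lt_mul_iff_right₀ hr').mpr h), if_pos h]
    exact Real.mul_rpow hr'.le (abs_nonneg a)
  · push_neg at h
    rw [if_neg (by push_neg; exact (mul_le_mul_iff_right₀ hr').mpr h), if_neg (by push_neg; exact h)]
    have e1 : (|r| * s + |r| * |a|) / 2 = |r| * ((s + |a|) / 2) := by ring
    have e2 : (|r| * s - |r| * |a|) / 2 = |r| * ((s - |a|) / 2) := by ring
    rw [e1, e2, Real.mul_rpow hr'.le (by positivity), Real.mul_rpow hr'.le (by linarith), mul_add]

lemma abs_pair {u v : ℝ} (h : |u + v| ≤ |u - v|) :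
    (|u| = (|u - v| + |u + v|) / 2 ∧ |v| = (|u - v| - |u + v|) / 2) ∨
    (|v| = (|u - v| + |u + v|) / 2 ∧ |u| = (|u - v| - |u + v|) / 2) := by
  rcases abs_cases (u + v) with ⟨h1, h1'⟩ | ⟨h1, h1'⟩ <;>
    rcases abs_cases (u - v) with ⟨h2, h2'⟩ | ⟨h2, h2'⟩ <;>
    rcases abs_cases u with ⟨h3, h3'⟩ | ⟨h3, h3'⟩ <;>
    rcases abs_cases v with ⟨h4, h4'⟩ | ⟨h4, h4'⟩ <;>
    first
      | (left; constructor <;> linarith)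
      | (right; constructor <;> linarith)

lemma wg_exist (hγ : 0 < γ) {a s : ℝ} (hs : 0 ≤ s) :
    ∃ u v : ℝ, u + v = a ∧ s ≤ |u - v| ∧ wg γ a s = |u| ^ γ + |v| ^ γ := by
  unfold wg
  split
  · rename_i h
    refine ⟨a, 0, by ring, by rw [sub_zero]; linarith, ?_⟩
    simp [Real.zero_rpow hγ.ne']
  · rename_i h
    push_neg at h
    refine ⟨(a + s) / 2, (a - s) / 2, by ring, ?_, ?_⟩
    · have : (a + s) / 2 - (a - s) / 2 = s := by ring
      rw [this, abs_of_nonneg hs]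
    · rcases abs_cases a with ⟨ha, ha'⟩ | ⟨ha, ha'⟩
      · have e1 : |(a + s) / 2| = (s + |a|) / 2 := by rw [abs_of_nonneg (by linarith)]; linarith
        have e2 : |(a - s) / 2| = (s - |a|) / 2 := by rw [abs_of_nonpos (by linarith)]; linarith
        rw [e1, e2]
      · have e1 : |(a + s) / 2| = (s - |a|) / 2 := by rw [abs_of_nonneg (by linarith)]; linarith
        have e2 : |(a - s) / 2| = (s + |a|) / 2 := by rw [abs_of_nonpos (by linarith)]; linarith
        rw [e1, e2, add_comm]

lemma wg_min (hγ : 0 < γ) (hγ1 : γ ≤ 1) {a s u v : ℝ} (hs : 0 ≤ s)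
    (huv : u + v = a) (hd : s ≤ |u - v|) : wg γ a s ≤ |u| ^ γ + |v| ^ γ := by
  unfold wg
  split
  · rename_i h
    calc |a| ^ γ = |u + v| ^ γ := by rw [huv]
      _ ≤ |u| ^ γ + |v| ^ γ := rpow_abs_subadd hγ hγ1 u v
  · rename_i h
    push_neg at h
    have hda : |a| ≤ |u - v| := le_trans h hd
    have h2 : |u + v| ≤ |u - v| := by rwa [huv]
    rcases abs_pair h2 with ⟨e1, e2⟩ | ⟨e1, e2⟩ <;> rw [e1, e2, huv] <;>
    · have k1 : (s + |a|) / 2 ≤ (|u - v| + |a|) / 2 := by linarith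
      have k2 : (s - |a|) / 2 ≤ (|u - v| - |a|) / 2 := by linarith
      have k3 : (0:ℝ) ≤ (s + |a|) / 2 := by positivity
      have k4 : (0:ℝ) ≤ (s - |a|) / 2 := by linarith
      have g1 := Real.rpow_le_rpow k3 k1 hγ.le
      have g2 := Real.rpow_le_rpow k4 k2 hγ.le
      first
        | linarith
        | (rw [add_comm]; linarith)

lemma wg_zero_left (hγ : 0 < γ) {s : ℝ} (hs : 0 ≤ s) :
    wg γ 0 s = 2 * (s / 2) ^ γ := by
  unfold wg
  rw [if_neg (by simp; linarith)]
  simp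
  ring

lemma wg_neg_one_le (hγ : 0 < γ) {s : ℝ} (hs : 0 ≤ s) (hs1 : s ≤ 1) :
    wg γ (-1) s ≤ 1 := by
  unfold wg
  have : |(-1 : ℝ)| = 1 := by norm_num
  rw [this]
  split
  · simp
  · rename_i h
    push_neg at h
    have : s = 1 := le_antisymm hs1 h
    subst this
    norm_num [Real.zero_rpow hγ.ne']

lemma wg_ge_s (hγ : 0 < γ) (hγ1 : γ ≤ 1) {a s : ℝ} (hs : 0 ≤ s) :
    s ^ γ ≤ wg γ a s := by
  unfold wg
  split
  · rename_i h
    exact Real.rpow_le_rpow hs h.le hγ.le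
  · rename_i h
    push_neg at h
    have e : s = (s + |a|) / 2 + (s - |a|) / 2 := by ring
    calc s ^ γ = ((s + |a|) / 2 + (s - |a|) / 2) ^ γ := by rw [← e]
      _ ≤ ((s + |a|) / 2) ^ γ + ((s - |a|) / 2) ^ γ :=
          rpow_subadd hγ hγ1 (by positivity) (by linarith)

lemma wg_ge_a (hγ : 0 < γ) {a s : ℝ} (hs : 0 ≤ s) :
    (|a| / 2) ^ γ ≤ wg γ a s := by
  unfold wg
  split
  · exact Real.rpow_le_rpow (by positivity) (by linarith [abs_nonneg a]) hγ.le
  · rename_i h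
    push_neg at h
    have t2 : (0:ℝ) ≤ ((s - |a|) / 2) ^ γ := Real.rpow_nonneg (by linarith) γ
    have : (|a| / 2) ^ γ ≤ ((s + |a|) / 2) ^ γ :=
      Real.rpow_le_rpow (by positivity) (by linarith) hγ.le
    linarith

lemma wg_le (hγ : 0 < γ) (hγ1 : γ ≤ 1) {a s : ℝ} (hs : 0 ≤ s) :
    wg γ a s ≤ |a| ^ γ + 2 * s ^ γ := by
  have hsγ : (0:ℝ) ≤ s ^ γ := Real.rpow_nonneg hs γ
  unfold wg
  split
  · nlinarith
  · rename_i h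
    push_neg at h
    have b1 : ((s + |a|) / 2) ^ γ ≤ s ^ γ + |a| ^ γ := by
      calc ((s + |a|) / 2) ^ γ ≤ (s + |a|) ^ γ :=
            Real.rpow_le_rpow (by positivity) (by linarith [abs_nonneg a]) hγ.le
        _ ≤ s ^ γ + |a| ^ γ := rpow_subadd hγ hγ1 hs (abs_nonneg a)
    have b2 : ((s - |a|) / 2) ^ γ ≤ s ^ γ :=
      Real.rpow_le_rpow (by linarith) (by linarith [abs_nonneg a]) hγ.le
    linarith

end ESharp

namespace ESharp2

/-- unit "basis" vectors in `ℕ →ᵇ ℝ` -/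
def ee (n : ℕ) : BoundedContinuousFunction ℕ ℝ :=
  BoundedContinuousFunction.ofNormedAddCommGroupDiscrete
    (fun m => if m = n then (1:ℝ) else 0) 1
    (by intro m; split <;> simp)

lemma ee_apply (n m : ℕ) : ee n m = if m = n then (1:ℝ) else 0 := rfl

lemma ee_norm_le (n : ℕ) : ‖ee n‖ ≤ 1 :=
  (BoundedContinuousFunction.norm_le zero_le_one).mpr
    (fun m => by rw [ee_apply]; split <;> simp)

lemma ee_norm (n : ℕ) : ‖ee n‖ = 1 := by
  refine le_antisymm (ee_norm_le n) ?_
  have h := BoundedContinuousFunction.norm_coe_le_norm (ee n) n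
  rw [ee_apply] at h
  simpa using h

lemma ee_ne_zero (n : ℕ) : ee n ≠ 0 := by
  intro h
  have := congrArg (fun f : BoundedContinuousFunction ℕ ℝ => f n) h
  simp [ee_apply] at this

lemma ee_sep {n m : ℕ} (h : n ≠ m) : 1 ≤ ‖ee n - ee m‖ := by
  have hb := BoundedContinuousFunction.norm_coe_le_norm (ee n - ee m) n
  rw [BoundedContinuousFunction.coe_sub] at hb
  simp only [Pi.sub_apply, ee_apply, if_pos rfl, if_neg h] at hb
  simpa using hb

lemma cover_iter {X : Type} [NormedAddCommGroup X] [NormedSpace ℝ X] {M : ℕ} {ε : ℝ}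
    (hε : 0 < ε) (c : Fin M → X) (hc : ∀ x : X, ‖x‖ ≤ 1 → ∃ i, ‖x - c i‖ ≤ ε) (n : ℕ) :
    ∃ d : Fin (M ^ n) → X, ∀ x : X, ‖x‖ ≤ 1 → ∃ i, ‖x - d i‖ ≤ ε ^ n := by
  induction n with
  | zero =>
    exact ⟨fun _ => 0, fun x hx => ⟨⟨0, by norm_num⟩, by simpa using hx⟩⟩
  | succ n ih =>
    obtain ⟨d, hd⟩ := ih
    refine ⟨fun j =>
      d (finProdFinEquiv.symm (Fin.cast (pow_succ M n) j)).1 +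
        ε ^ n • c (finProdFinEquiv.symm (Fin.cast (pow_succ M n) j)).2, ?_⟩
    intro x hx
    obtain ⟨i, hi⟩ := hd x hx
    have hεn : (0:ℝ) < ε ^ n := pow_pos hε n
    set y := (ε ^ n)⁻¹ • (x - d i) with hy_def
    have hy : ‖y‖ ≤ 1 := by
      rw [hy_def, norm_smul, norm_inv, Real.norm_of_nonneg hεn.le]
      rw [inv_mul_eq_div]
      exact (div_le_one hεn).mpr hi
    obtain ⟨j, hj⟩ := hc y hy
    refine ⟨Fin.cast (pow_succ M n).symm (finProdFinEquiv (i, j)), ?_⟩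
    have hsimp : (finProdFinEquiv.symm (Fin.cast (pow_succ M n)
        (Fin.cast (pow_succ M n).symm (finProdFinEquiv (i, j))))) = (i, j) := by
      simp
    simp only [hsimp]
    have hxy : x - (d i + ε ^ n • c j) = ε ^ n • (y - c j) := by
      rw [hy_def, smul_sub, smul_inv_smul₀ hεn.ne']
      abel
    rw [hxy, norm_smul, Real.norm_of_nonneg hεn.le, pow_succ]
    exact mul_le_mul_of_nonneg_left hj hεn.le

lemma no_small_cover {M : ℕ} {ε : ℝ} (hε : 0 < ε) (hε1 : ε < 1)
    (c : Fin M → BoundedContinuousFunction ℕ ℝ)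
    (hc : ∀ x, ‖x‖ ≤ 1 → ∃ i, ‖x - c i‖ ≤ ε) : False := by
  obtain ⟨n, hn⟩ := exists_pow_lt_of_lt_one (show (0:ℝ) < 1/2 by norm_num) hε1
  obtain ⟨d, hd⟩ := cover_iter hε c hc n
  have hcard : Fintype.card (Fin (M ^ n)) < Fintype.card (Fin (M ^ n + 1)) := by simp
  have hsel : ∀ i : Fin (M ^ n + 1), ∃ j, ‖ee i - d j‖ ≤ ε ^ n :=
    fun i => hd (ee i) (ee_norm_le i)
  choose φ hφ using hsel
  obtain ⟨i, j, hij, hphi⟩ := Fintype.exists_ne_map_eq_of_card_lt φ hcard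
  have hnm : (i : ℕ) ≠ (j : ℕ) := fun h => hij (Fin.ext h)
  have h1 := hφ i
  have h2 := hφ j
  rw [hphi] at h1
  have htri : ‖ee (i : ℕ) - ee (j : ℕ)‖ ≤ ‖ee (i:ℕ) - d (φ j)‖ + ‖ee (j:ℕ) - d (φ j)‖ := by
    have := norm_sub_le (ee (i:ℕ) - d (φ j)) (ee (j:ℕ) - d (φ j))
    simpa using this
  have := ee_sep hnm
  linarith

end ESharp2

namespace ESharp3
open ESharp ESharp2

variable {γ : ℝ}

abbrev XX : Type := BoundedContinuousFunction ℕ ℝ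
abbrev YY : Type := ℝ × XX

/-- the γ-norm on `ℝ × X` -/
def NN (γ : ℝ) (p : YY) : ℝ := (wg γ p.1 ‖p.2‖) ^ (1/γ)

lemma abs_add_of_mul_nonneg {a b : ℝ} (h : 0 ≤ a * b) : |a + b| = |a| + |b| := by
  rcases le_or_gt 0 a with ha | ha <;> rcases le_or_gt 0 b with hb | hb
  · rw [abs_of_nonneg ha, abs_of_nonneg hb, abs_of_nonneg (by linarith)]
  · have ha0 : a = 0 := le_antisymm (by nlinarith) ha
    subst ha0; simp
  · have hb0 : b = 0 := le_antisymm (by nlinarith) hb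
    subst hb0; simp
  · rw [abs_of_neg ha, abs_of_neg hb, abs_of_neg (by linarith)]; ring

lemma rpow_rpow_inv (hγ : 0 < γ) {w : ℝ} (hw : 0 ≤ w) : (w ^ γ) ^ (1/γ) = w := by
  rw [← Real.rpow_mul hw, mul_one_div, div_self hγ.ne', Real.rpow_one]

lemma NN_pow (hγ : 0 < γ) (p : YY) : (NN γ p) ^ γ = wg γ p.1 ‖p.2‖ := by
  rw [NN, ← Real.rpow_mul (wg_nonneg hγ (norm_nonneg p.2)), one_div,
    inv_mul_cancel₀ hγ.ne', Real.rpow_one]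

lemma NN_nonneg (hγ : 0 < γ) (p : YY) : 0 ≤ NN γ p :=
  Real.rpow_nonneg (wg_nonneg hγ (norm_nonneg p.2)) _

lemma le_NN_of_rpow_le (hγ : 0 < γ) {x : ℝ} (p : YY) (hx : 0 ≤ x)
    (h : x ^ γ ≤ wg γ p.1 ‖p.2‖) : x ≤ NN γ p := by
  calc x = (x ^ γ) ^ (1/γ) := (rpow_rpow_inv hγ hx).symm
    _ ≤ NN γ p := Real.rpow_le_rpow (Real.rpow_nonneg hx γ) h (by positivity)

lemma fst_le_NN (hγ : 0 < γ) (p : YY) : |p.1| / 2 ≤ NN γ p :=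
  le_NN_of_rpow_le hγ p (by positivity) (wg_ge_a hγ (norm_nonneg p.2))

lemma snd_le_NN (hγ : 0 < γ) (hγ1 : γ ≤ 1) (p : YY) : ‖p.2‖ ≤ NN γ p :=
  le_NN_of_rpow_le hγ p (norm_nonneg p.2) (wg_ge_s hγ hγ1 (norm_nonneg p.2))

lemma NN_gammaNorm (hγ : 0 < γ) (hγ1 : γ ≤ 1) : IsGammaNorm γ (NN γ) := by
  refine ⟨NN_nonneg hγ, ?_, ?_, ?_⟩
  · intro p
    rw [NN, Real.rpow_eq_zero (wg_nonneg hγ (norm_nonneg p.2)) (one_div_ne_zero hγ.ne'),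
      wg_eq_zero hγ (norm_nonneg p.2), Prod.ext_iff]
    simp [norm_eq_zero]
  · intro a p
    have h1 : (a • p).1 = a * p.1 := rfl
    have h2 : ‖(a • p).2‖ = |a| * ‖p.2‖ := by
      have he : (a • p).2 = a • p.2 := rfl
      rw [he]
      exact (norm_smul a p.2).trans (by rw [Real.norm_eq_abs])
    rw [NN, h1, h2, wg_smul hγ (norm_nonneg p.2) a,
      Real.mul_rpow (Real.rpow_nonneg (abs_nonneg a) γ) (wg_nonneg hγ (norm_nonneg p.2)),
      rpow_rpow_inv hγ (abs_nonneg a)]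
    rfl
  · intro p q
    rw [NN_pow hγ, NN_pow hγ, NN_pow hγ]
    obtain ⟨u, v, huv, hd, hval⟩ := wg_exist hγ (norm_nonneg p.2) (a := p.1)
    obtain ⟨u', v', huv', hd', hval'⟩ := wg_exist hγ (norm_nonneg q.2) (a := q.1)
    have main : ∀ U V : ℝ, U + V = q.1 → ‖q.2‖ ≤ |U - V| →
        |U| ^ γ + |V| ^ γ = |u'| ^ γ + |v'| ^ γ → 0 ≤ (u - v) * (U - V) →
        wg γ (p + q).1 ‖(p + q).2‖ ≤ wg γ p.1 ‖p.2‖ + wg γ q.1 ‖q.2‖ := by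
      intro U V hUV hdU hvalU hsg
      have habs : |(u - v) + (U - V)| = |u - v| + |U - V| := abs_add_of_mul_nonneg hsg
      have hsum : (u + U) + (v + V) = (p + q).1 := by
        have : (p + q).1 = p.1 + q.1 := rfl
        rw [this]; linarith
      have hnorm : ‖(p + q).2‖ ≤ |(u + U) - (v + V)| := by
        have he : (u + U) - (v + V) = (u - v) + (U - V) := by ring
        rw [he, habs]
        have h2 : (p + q).2 = p.2 + q.2 := rfl
        calc ‖(p + q).2‖ = ‖p.2 + q.2‖ := by rw [h2]
          _ ≤ ‖p.2‖ + ‖q.2‖ := norm_add_le _ _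
          _ ≤ |u - v| + |U - V| := add_le_add hd hdU
      calc wg γ (p + q).1 ‖(p + q).2‖ ≤ |u + U| ^ γ + |v + V| ^ γ :=
            wg_min hγ hγ1 (norm_nonneg _) hsum hnorm
        _ ≤ (|u| ^ γ + |U| ^ γ) + (|v| ^ γ + |V| ^ γ) :=
            add_le_add (rpow_abs_subadd hγ hγ1 u U) (rpow_abs_subadd hγ hγ1 v V)
        _ = (|u| ^ γ + |v| ^ γ) + (|U| ^ γ + |V| ^ γ) := by ring
        _ = wg γ p.1 ‖p.2‖ + wg γ q.1 ‖q.2‖ := by rw [hvalU, ← hval, ← hval']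
    rcases le_or_gt 0 ((u - v) * (u' - v')) with hsg | hsg
    · exact main u' v' huv' hd' rfl hsg
    · exact main v' u' (by linarith) (by rw [abs_sub_comm]; exact hd') (by ring) (by nlinarith)

lemma NN_le_of_le (hγ : 0 < γ) (hγ1 : γ ≤ 1) {δ : ℝ} (hδ : 0 ≤ δ) (p : YY)
    (h1 : |p.1| ≤ δ) (h2 : ‖p.2‖ ≤ δ) : NN γ p ≤ 3 ^ (1/γ) * δ := by
  have hw : wg γ p.1 ‖p.2‖ ≤ 3 * δ ^ γ := by
    have b1 : |p.1| ^ γ ≤ δ ^ γ := Real.rpow_le_rpow (abs_nonneg _) h1 hγ.le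
    have b2 : ‖p.2‖ ^ γ ≤ δ ^ γ := Real.rpow_le_rpow (norm_nonneg _) h2 hγ.le
    have := wg_le hγ hγ1 (norm_nonneg p.2) (a := p.1)
    linarith
  calc NN γ p ≤ (3 * δ ^ γ) ^ (1/γ) :=
        Real.rpow_le_rpow (wg_nonneg hγ (norm_nonneg p.2)) hw (by positivity)
    _ = 3 ^ (1/γ) * δ := by
        rw [Real.mul_rpow (by norm_num) (Real.rpow_nonneg hδ γ), rpow_rpow_inv hγ hδ]

lemma NN_complete (hγ : 0 < γ) (hγ1 : γ ≤ 1) : NormComplete (NN γ) := by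
  intro f hf
  set a : ℕ → ℝ := fun n => (f n).1 with ha_def
  set b : ℕ → XX := fun n => (f n).2 with hb_def
  have hfst : ∀ m n, a m - a n = (f m - f n).1 := fun m n => rfl
  have hsnd : ∀ m n, b m - b n = (f m - f n).2 := fun m n => rfl
  have hca : CauchySeq a := by
    rw [Metric.cauchySeq_iff]
    intro ε hε
    obtain ⟨n₀, hn₀⟩ := hf (ε / 2) (by linarith)
    refine ⟨n₀, fun m hm n hn => ?_⟩
    have h1 := fst_le_NN hγ (f m - f n)
    rw [← hfst] at h1
    have := hn₀ m n hm hn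
    rw [Real.dist_eq]
    linarith
  have hcb : CauchySeq b := by
    rw [Metric.cauchySeq_iff]
    intro ε hε
    obtain ⟨n₀, hn₀⟩ := hf ε hε
    refine ⟨n₀, fun m hm n hn => ?_⟩
    have h1 := snd_le_NN hγ hγ1 (f m - f n)
    rw [← hsnd] at h1
    have := hn₀ m n hm hn
    rw [dist_eq_norm]
    linarith
  obtain ⟨la, hla⟩ := cauchySeq_tendsto_of_complete hca
  obtain ⟨lb, hlb⟩ := cauchySeq_tendsto_of_complete hcb
  refine ⟨(la, lb), fun ε hε => ?_⟩
  have h3 : (0:ℝ) < 3 ^ (1/γ) := Real.rpow_pos_of_pos (by norm_num) _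
  set δ := ε / (3 ^ (1/γ) + 1) with hδ_def
  have hδ : 0 < δ := by positivity
  obtain ⟨n₁, hn₁⟩ := Metric.tendsto_atTop.mp hla δ hδ
  obtain ⟨n₂, hn₂⟩ := Metric.tendsto_atTop.mp hlb δ hδ
  refine ⟨max n₁ n₂, fun n hn => ?_⟩
  have e1 : |(f n - (la, lb)).1| ≤ δ := by
    have := hn₁ n (le_trans (le_max_left _ _) hn)
    rw [Real.dist_eq] at this
    exact le_of_lt this
  have e2 : ‖(f n - (la, lb)).2‖ ≤ δ := by
    have := hn₂ n (le_trans (le_max_right _ _) hn)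
    rw [dist_eq_norm] at this
    exact le_of_lt this
  have := NN_le_of_le hγ hγ1 hδ.le (f n - (la, lb)) e1 e2
  have hlt : 3 ^ (1/γ) * δ < ε := by
    have hx : 3 ^ (1/γ) * δ < (3 ^ (1/γ) + 1) * δ := by nlinarith
    have hy : (3 ^ (1/γ) + 1) * δ = ε := by
      rw [hδ_def]; field_simp
    linarith
  linarith

end ESharp3

namespace ESharp3
open ESharp ESharp2

def TT : XX →ₗ[ℝ] YY := LinearMap.prod 0 LinearMap.id

lemma TT_apply (x : XX) : TT x = ((0:ℝ), x) := rfl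

lemma NN_T (hγ : 0 < γ) (x : XX) : NN γ ((0:ℝ), x) = 2 ^ (1/γ - 1) * ‖x‖ := by
  have h0 : NN γ ((0:ℝ), x) = (wg γ 0 ‖x‖) ^ (1/γ) := rfl
  rw [h0, wg_zero_left hγ (norm_nonneg x),
    Real.mul_rpow (by norm_num) (Real.rpow_nonneg (by positivity) γ),
    rpow_rpow_inv hγ (by positivity : (0:ℝ) ≤ ‖x‖ / 2),
    Real.rpow_sub (by norm_num : (0:ℝ) < 2), Real.rpow_one]
  ring

lemma opNorm_T (hγ : 0 < γ) : opNorm (fun x : XX => ‖x‖) (NN γ) TT = 2 ^ (1/γ - 1) := by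
  have hc : (0:ℝ) < 2 ^ (1/γ - 1) := Real.rpow_pos_of_pos (by norm_num) _
  have hmem : (2:ℝ) ^ (1/γ - 1) ∈
      {r : ℝ | ∃ x : XX, ‖x‖ ≤ 1 ∧ r = NN γ (TT x)} := by
    refine ⟨ee 0, le_of_eq (ee_norm 0), ?_⟩
    rw [TT_apply, NN_T hγ, ee_norm, mul_one]
  have hub : ∀ r ∈ {r : ℝ | ∃ x : XX, ‖x‖ ≤ 1 ∧ r = NN γ (TT x)},
      r ≤ 2 ^ (1/γ - 1) := by
    rintro r ⟨x, hx, rfl⟩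
    rw [TT_apply, NN_T hγ]
    nlinarith [norm_nonneg x]
  exact le_antisymm (csSup_le ⟨_, hmem⟩ hub) (le_csSup ⟨_, hub⟩ hmem)

lemma entropy_T (hγ : 0 < γ) (hγ1 : γ ≤ 1) (k : ℕ) :
    entropy (fun x : XX => ‖x‖) (NN γ) TT k = 1 := by
  have hmem : (1:ℝ) ∈ {ε : ℝ | 0 < ε ∧ ∃ c : Fin (2 ^ (k - 1)) → YY,
      ∀ x : XX, ‖x‖ ≤ 1 → ∃ i, NN γ (TT x - c i) ≤ ε} := by
    refine ⟨one_pos, fun _ => ((1:ℝ), (0:XX)), fun x hx => ?_⟩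
    refine ⟨⟨0, by positivity⟩, ?_⟩
    have he : TT x - ((1:ℝ), (0:XX)) = ((-1:ℝ), x) := by
      rw [TT_apply, Prod.mk_sub_mk]
      norm_num
    rw [he]
    have h0 : NN γ ((-1:ℝ), x) = (wg γ (-1) ‖x‖) ^ (1/γ) := rfl
    rw [h0]
    calc (wg γ (-1) ‖x‖) ^ (1/γ) ≤ (1:ℝ) ^ (1/γ) :=
          Real.rpow_le_rpow (wg_nonneg hγ (norm_nonneg x))
            (wg_neg_one_le hγ (norm_nonneg x) hx) (by positivity)
      _ = 1 := Real.one_rpow _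
  have hlb : ∀ ε ∈ {ε : ℝ | 0 < ε ∧ ∃ c : Fin (2 ^ (k - 1)) → YY,
      ∀ x : XX, ‖x‖ ≤ 1 → ∃ i, NN γ (TT x - c i) ≤ ε}, (1:ℝ) ≤ ε := by
    rintro ε ⟨hε, c, hc⟩
    by_contra hlt
    push_neg at hlt
    refine no_small_cover hε hlt (fun i => (c i).2) (fun x hx => ?_)
    obtain ⟨i, hi⟩ := hc x hx
    refine ⟨i, ?_⟩
    have h2 : (TT x - c i).2 = x - (c i).2 := rfl
    have hle := snd_le_NN hγ hγ1 (TT x - c i)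
    rw [h2] at hle
    linarith
  unfold entropy
  exact le_antisymm (csInf_le ⟨1, hlb⟩ hmem) (le_csInf ⟨1, hmem⟩ hlb)

lemma TT_ne : TT ≠ 0 := by
  intro h
  have h1 : TT (ee 0) = 0 := by rw [h]; rfl
  have h2 : (TT (ee 0)).2 = ee 0 := rfl
  rw [h1] at h2
  exact ee_ne_zero 0 h2.symm

end ESharp3

theorem exists_operator_entropy_sharp (γ : ℝ) (hγ : 0 < γ) (hγ1 : γ ≤ 1) :
    ∃ (X : Type) (_ : NormedAddCommGroup X) (_ : NormedSpace ℝ X) (_ : CompleteSpace X)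
      (Y : Type) (_ : AddCommGroup Y) (_ : Module ℝ Y) (N : Y → ℝ) (T : X →ₗ[ℝ] Y),
      IsGammaNorm γ N ∧ NormComplete N ∧ T ≠ 0 ∧
        (∃ M : ℝ, ∀ x, N (T x) ≤ M * ‖x‖) ∧
        ∀ k : ℕ, 1 ≤ k →
          entropy (fun x : X => ‖x‖) N T k =
            (2 : ℝ) ^ (1 - 1/γ) * opNorm (fun x : X => ‖x‖) N T := by
  refine ⟨ESharp3.XX, inferInstance, inferInstance, inferInstance, ESharp3.YY,
    inferInstance, inferInstance, ESharp3.NN γ, ESharp3.TT,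
    ESharp3.NN_gammaNorm hγ hγ1, ESharp3.NN_complete hγ hγ1, ESharp3.TT_ne, ?_, ?_⟩
  · refine ⟨2 ^ (1/γ - 1), fun x => ?_⟩
    rw [ESharp3.TT_apply]
    exact le_of_eq (ESharp3.NN_T hγ x)
  · intro k _
    rw [ESharp3.entropy_T hγ hγ1 k, ESharp3.opNorm_T hγ,
      ← Real.rpow_add (by norm_num : (0:ℝ) < 2),
      show (1 - 1/γ) + (1/γ - 1) = 0 by ring, Real.rpow_zero]
end
end
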